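/- arXiv:1312.0247 — 8 statements merged into one kernel-verified Lean document; each statement's English description precedes it below -/
import Mathlib

section
/- If a and b are selfadjoint elements of a C*-algebra with ‖a‖ ≤ m, ‖b‖ ≤ m, m ≥ 1, ‖a - b‖ < δ, and δ ≤ 1, then the positive parts satisfy ‖a⁺ - b⁺‖ < 2·(log(16m))·√δ, where x⁺ = (x + |x|)/2. -/
/-- For a selfadjoint element `x` of a C*-algebra, `|x| = √(x²)` is given by the
continuous functional calculus applied to `t ↦ |t|`, and the positive part is
`x⁺ = (x + |x|)/2`. -/
noncomputable def cstarAbs {A : Type*} [CStarAlgebra A] (x : A) : A :=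
  cfc (fun t : ℝ => |t|) x

noncomputable def cstarPosPart {A : Type*} [CStarAlgebra A] (x : A) : A :=
  (2 : ℂ)⁻¹ • (x + cstarAbs x)

set_option maxHeartbeats 1000000 in
/-- If `a`, `b` are selfadjoint, `‖a‖ ≤ m`, `‖b‖ ≤ m`, `m ≥ 1`, `‖a - b‖ < δ`, `δ ≤ 1`,
then (granting Kato's inequality) `‖a⁺ - b⁺‖ < 2 · log(16m) · √δ`. -/
theorem stmt_0 {A : Type*} [CStarAlgebra A]
    (a b : A) (ha : IsSelfAdjoint a) (hb : IsSelfAdjoint b)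
    (m δ : ℝ) (hm : 1 ≤ m) (hna : ‖a‖ ≤ m) (hnb : ‖b‖ ≤ m)
    (hab : ‖a - b‖ < δ) (hδ : δ ≤ 1)
    (hKato : ‖cstarAbs a - cstarAbs b‖ ≤
      (2 / Real.pi) * (2 + Real.log ((‖a‖ + ‖b‖) / ‖a - b‖)) * ‖a - b‖) :
    ‖cstarPosPart a - cstarPosPart b‖ < 2 * Real.log (16 * m) * Real.sqrt δ := by
  have hm0 : (0:ℝ) < m := lt_of_lt_of_le one_pos hm
  have hδ0 : 0 < δ := lt_of_le_of_lt (norm_nonneg _) hab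
  have ht0 : 0 < Real.sqrt δ := Real.sqrt_pos.mpr hδ0
  have hlog16m : 0 < Real.log (16 * m) :=
    Real.log_pos (by nlinarith)
  -- decomposition
  have hdecomp : cstarPosPart a - cstarPosPart b
      = (2:ℂ)⁻¹ • ((a - b) + (cstarAbs a - cstarAbs b)) := by
    simp only [cstarPosPart, ← smul_sub]
    congr 1
    abel
  have hnorm : ‖cstarPosPart a - cstarPosPart b‖
      = 2⁻¹ * ‖(a - b) + (cstarAbs a - cstarAbs b)‖ := by
    rw [hdecomp, norm_smul]
    norm_num
  have hbound : ‖cstarPosPart a - cstarPosPart b‖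
      ≤ 2⁻¹ * (‖a - b‖ + ‖cstarAbs a - cstarAbs b‖) := by
    rw [hnorm]
    gcongr
    exact norm_add_le _ _
  by_cases heq : a = b
  · subst heq
    rw [sub_self, norm_zero]
    exact mul_pos (mul_pos two_pos hlog16m) ht0
  -- nontrivial case
  set d : ℝ := ‖a - b‖ with hd
  have hd0 : 0 < d := norm_pos_iff.mpr (sub_ne_zero.mpr heq)
  have hs0 : 0 < ‖a‖ + ‖b‖ := by
    by_contra h
    push_neg at h
    have ha0 : a = 0 := norm_le_zero_iff.mp (by nlinarith [norm_nonneg a, norm_nonneg b])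
    have hb0 : b = 0 := norm_le_zero_iff.mp (by nlinarith [norm_nonneg a, norm_nonneg b])
    exact heq (ha0.trans hb0.symm)
  have hd1 : d < 1 := lt_of_lt_of_le hab hδ
  have hπ : 3 < Real.pi := Real.pi_gt_three
  have hlogm : 0 ≤ Real.log m := Real.log_nonneg hm
  have hlog2 : 0.6931471803 < Real.log 2 := Real.log_two_gt_d9
  have hlog2m : Real.log (2 * m) = Real.log 2 + Real.log m :=
    Real.log_mul two_ne_zero (ne_of_gt hm0)
  have hlog16m' : Real.log (16 * m) = 4 * Real.log 2 + Real.log m := by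
    rw [Real.log_mul (by norm_num) (ne_of_gt hm0),
      show (16:ℝ) = 2 ^ (4:ℕ) by norm_num, Real.log_pow]
    norm_num
  -- log (s/d)
  have hlogsd : Real.log ((‖a‖ + ‖b‖) / d) ≤ Real.log (2 * m) - Real.log d := by
    rw [Real.log_div (ne_of_gt hs0) (ne_of_gt hd0)]
    have : Real.log (‖a‖ + ‖b‖) ≤ Real.log (2 * m) :=
      Real.log_le_log hs0 (by linarith)
    linarith
  have hlogd0 : Real.log d ≤ 0 := Real.log_nonpos (le_of_lt hd0) (le_of_lt hd1)
  -- -log d * d ≤ 2 * sqrt d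
  have hsd0 : 0 < Real.sqrt d := Real.sqrt_pos.mpr hd0
  have hkey : -Real.log d * d ≤ 2 * Real.sqrt d := by
    have h1 : Real.log ((Real.sqrt d)⁻¹) ≤ (Real.sqrt d)⁻¹ - 1 :=
      Real.log_le_sub_one_of_pos (by positivity)
    rw [Real.log_inv, Real.log_sqrt (le_of_lt hd0)] at h1
    have hds : d / Real.sqrt d = Real.sqrt d := Real.div_sqrt
    have h2 : -Real.log d * d ≤ 2 * ((Real.sqrt d)⁻¹ * d) := by nlinarith
    rw [inv_mul_eq_div, hds] at h2
    linarith
  have hsdδ : Real.sqrt d < Real.sqrt δ := Real.sqrt_lt_sqrt (le_of_lt hd0) hab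
  have hdt : d ≤ Real.sqrt δ := by
    have h1 : Real.sqrt δ ≤ 1 := Real.sqrt_le_one.mpr hδ
    have h2 : Real.sqrt δ * Real.sqrt δ = δ := Real.mul_self_sqrt (le_of_lt hδ0)
    nlinarith
  -- Kato refined
  have hπ0 : (0:ℝ) < Real.pi := by linarith
  have hK : ‖cstarAbs a - cstarAbs b‖
      ≤ (2 / Real.pi) * ((2 + Real.log (2 * m) - Real.log d) * d) := by
    refine hKato.trans ?_
    rw [mul_assoc]
    refine mul_le_mul_of_nonneg_left ?_ (by positivity)
    exact mul_le_mul_of_nonneg_right (by linarith) (le_of_lt hd0)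
  have hlog2m0 : 0 ≤ Real.log (2 * m) := by rw [hlog2m]; linarith
  have hX0 : 0 ≤ (2 + Real.log (2 * m) - Real.log d) * d := by
    have h1 : 0 ≤ 2 + Real.log (2 * m) - Real.log d := by linarith
    positivity
  have h2π : 2 / Real.pi ≤ 2 / 3 :=
    div_le_div_of_nonneg_left (by norm_num) (by norm_num) (le_of_lt hπ)
  have hK2 : ‖cstarAbs a - cstarAbs b‖
      ≤ (2 / 3) * ((2 + Real.log (2 * m) - Real.log d) * d) :=
    hK.trans (mul_le_mul_of_nonneg_right h2π hX0)
  have hX : (2 + Real.log (2 * m) - Real.log d) * d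
      ≤ (4 + Real.log (2 * m)) * Real.sqrt δ := by
    have h1 : (2 + Real.log (2 * m)) * d ≤ (2 + Real.log (2 * m)) * Real.sqrt δ :=
      mul_le_mul_of_nonneg_left hdt (by linarith)
    have h2 : -Real.log d * d ≤ 2 * Real.sqrt δ := by linarith
    linarith
  have hXc : (2/3) * ((2 + Real.log (2 * m) - Real.log d) * d)
      ≤ (2/3) * ((4 + Real.log (2 * m)) * Real.sqrt δ) :=
    mul_le_mul_of_nonneg_left hX (by norm_num)
  have hfinal : ‖cstarPosPart a - cstarPosPart b‖
      ≤ (2⁻¹ + (1/3) * (4 + Real.log (2 * m))) * Real.sqrt δ := by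
    have h3 : ‖cstarPosPart a - cstarPosPart b‖
        ≤ 2⁻¹ * (d + (2/3) * ((4 + Real.log (2 * m)) * Real.sqrt δ)) := by
      refine hbound.trans ?_
      have := hK2.trans hXc
      linarith
    refine h3.trans ?_
    linarith [hdt]
  refine lt_of_le_of_lt hfinal ?_
  rw [hlog16m']
  have hc : 2⁻¹ + (1/3) * (4 + Real.log (2 * m)) < 2 * (4 * Real.log 2 + Real.log m) := by
    rw [hlog2m]; linarith
  calc (2⁻¹ + (1/3) * (4 + Real.log (2 * m))) * Real.sqrt δ
      < (2 * (4 * Real.log 2 + Real.log m)) * Real.sqrt δ :=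
        mul_lt_mul_of_pos_right hc ht0
    _ = 2 * (4 * Real.log 2 + Real.log m) * Real.sqrt δ := by ring
end

section
/- If a and b are selfadjoint elements of a C*-algebra with a ≠ b, then ‖|a| - |b|‖ ≤ (2/π)·(2 + log((‖a‖ + ‖b‖)/‖a - b‖))·‖a - b‖. -/
open Real intervalIntegral MeasureTheory

section KatoAux

variable {A : Type*} [CStarAlgebra A]

/-! ### Scalar helper lemmas -/

lemma my_arctan_nonneg {u : ℝ} (hu : 0 ≤ u) : 0 ≤ arctan u := by
  rw [← Real.arctan_zero]
  exact Real.arctan_strictMono.monotone hu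

lemma my_arctan_le_self {u : ℝ} (hu : 0 ≤ u) : arctan u ≤ u := by
  have h := Real.le_tan (my_arctan_nonneg hu) (Real.arctan_lt_pi_div_two u)
  rwa [Real.tan_arctan] at h

lemma kato_scalar_int {s ε T : ℝ} (hε : 0 < ε) (hT : ε ≤ T) (hs : s ≠ 0) :
    ∫ t in ε..T, s^2/(s^2+t^2) = |s| * arctan (T/|s|) - |s| * arctan (ε/|s|) := by
  set c := |s| with hc
  have hc0 : 0 < c := abs_pos.mpr hs
  refine integral_eq_sub_of_hasDerivAt (f := fun u : ℝ => c * arctan (u/c))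
    (f' := fun t : ℝ => s^2/(s^2+t^2)) (fun t _ => ?_) ?_
  · have h1 : HasDerivAt (fun u : ℝ => u/c) (1/c) t := (hasDerivAt_id t).div_const c
    have h2 := Real.hasDerivAt_arctan (t/c)
    have h3 := (h2.comp t h1).const_mul c
    refine h3.congr_deriv ?_
    have hc2 : c^2 = s^2 := sq_abs s
    have : (0:ℝ) < s^2 + t^2 := by positivity
    field_simp
    rw [hc2]
    ring
  · apply Continuous.intervalIntegrable (u := fun t : ℝ => s^2/(s^2+t^2))
    exact continuous_const.div (by fun_prop) (fun t => by positivity)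

lemma kato_scalar {s ε T : ℝ} (hε : 0 < ε) (hT : ε ≤ T) :
    0 ≤ |s| - (2/π) * ∫ t in ε..T, s^2/(s^2+t^2) ∧
      |s| - (2/π) * ∫ t in ε..T, s^2/(s^2+t^2) ≤ (2/π) * (ε + s^2/T) := by
  have hT0 : 0 < T := lt_of_lt_of_le hε hT
  rcases eq_or_ne s 0 with rfl | hs
  · have : (fun t : ℝ => (0:ℝ)^2/((0:ℝ)^2+t^2)) = fun _ => (0:ℝ) := by
      funext t; simp
    rw [this]
    refine ⟨by simp, ?_⟩
    simp only [intervalIntegral.integral_zero, mul_zero, sub_zero, abs_zero]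
    positivity
  · set c := |s| with hc
    have hc0 : 0 < c := abs_pos.mpr hs
    rw [kato_scalar_int hε hT hs]
    have hα : arctan (T/c) < π/2 := Real.arctan_lt_pi_div_two _
    have hβ : 0 ≤ arctan (ε/c) := my_arctan_nonneg (by positivity)
    have hπ := Real.pi_pos
    have hkey : π/2 - arctan (T/c) = arctan (c/T) := by
      have := Real.arctan_inv_of_pos (show 0 < T/c by positivity)
      rw [← this, inv_div]
    have h1 : arctan (c/T) ≤ c/T := my_arctan_le_self (by positivity)
    have h2 : arctan (ε/c) ≤ ε/c := my_arctan_le_self (by positivity)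
    have hrw : c - (2/π) * (c * arctan (T/c) - c * arctan (ε/c))
        = (2/π) * (c * ((π/2 - arctan (T/c)) + arctan (ε/c))) := by
      field_simp
      ring
    constructor
    · rw [hrw]
      have : 0 ≤ (π/2 - arctan (T/c)) + arctan (ε/c) := by linarith
      positivity
    · rw [hrw]
      have hmul : c * ((π/2 - arctan (T/c)) + arctan (ε/c)) ≤ ε + s^2/T := by
        rw [hkey]
        calc c * (arctan (c/T) + arctan (ε/c)) ≤ c * (c/T + ε/c) := by
              apply mul_le_mul_of_nonneg_left (by linarith) hc0.le
          _ = c^2/T + ε := by field_simp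
          _ = ε + s^2/T := by rw [sq_abs]; ring
      apply mul_le_mul_of_nonneg_left hmul (by positivity)

/-! ### The resolvent-type elements and algebraic identities -/

/-- The positive contraction `t²(x²+t²)⁻¹` given by functional calculus. -/
noncomputable def katoQ (t : ℝ) (x : A) : A := cfc (fun s : ℝ => t^2/(s^2+t^2)) x

lemma cont_den {t : ℝ} (ht : t ≠ 0) : Continuous fun s : ℝ => (s^2+t^2)⁻¹ :=
  ((continuous_pow 2).add continuous_const).inv₀ (fun s => (add_pos_of_nonneg_of_pos (sq_nonneg s) (pow_pos (abs_pos.mpr ht) 2 |>.trans_eq (sq_abs t))).ne')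

lemma cont_div {t : ℝ} (ht : t ≠ 0) (g : ℝ → ℝ) (hg : Continuous g) :
    Continuous fun s : ℝ => g s / (s^2+t^2) := by
  simp only [div_eq_mul_inv]; exact hg.mul (cont_den ht)

lemma norm_katoQ_le_one (t : ℝ) (ht : 0 < t) (x : A) : ‖katoQ t x‖ ≤ 1 := by
  refine norm_cfc_le zero_le_one fun s _ => ?_
  rw [Real.norm_eq_abs, abs_of_nonneg (by positivity), div_le_one (by positivity)]
  nlinarith [sq_nonneg s]

lemma norm_katoR_le (t : ℝ) (ht : 0 < t) (x : A) :
    ‖cfc (fun s : ℝ => (s^2+t^2)⁻¹) x‖ ≤ (t^2)⁻¹ := by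
  refine norm_cfc_le (by positivity) fun s _ => ?_
  rw [Real.norm_eq_abs, abs_of_nonneg (by positivity)]
  exact inv_anti₀ (by positivity) (by nlinarith [sq_nonneg s])

lemma norm_katoRa_mul_self (t : ℝ) (ht : 0 < t) (x : A) (hx : IsSelfAdjoint x) :
    ‖cfc (fun s : ℝ => (s^2+t^2)⁻¹) x * x‖ ≤ (2*t)⁻¹ := by
  have h := cfc_mul (fun s : ℝ => (s^2+t^2)⁻¹) id x (cont_den ht.ne').continuousOn
    continuousOn_id
  rw [cfc_id ℝ x hx] at h
  rw [← h]
  refine norm_cfc_le (by positivity) fun s _ => ?_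
  have hd : (0:ℝ) < s^2+t^2 := by positivity
  have h2t : (0:ℝ) < 2*t := by positivity
  rw [Real.norm_eq_abs, id, abs_mul, abs_inv, abs_of_nonneg hd.le, inv_mul_eq_div,
    inv_eq_one_div, div_le_div_iff₀ hd h2t]
  nlinarith [sq_nonneg (|s| - t), sq_abs s, abs_nonneg s]

lemma norm_self_mul_katoQ (t : ℝ) (ht : 0 < t) (x : A) (hx : IsSelfAdjoint x) :
    ‖x * katoQ t x‖ ≤ t/2 := by
  have h := cfc_mul id (fun s : ℝ => t^2/(s^2+t^2)) x continuousOn_id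
    (cont_div ht.ne' _ continuous_const).continuousOn
  rw [cfc_id ℝ x hx] at h
  rw [katoQ, ← h]
  refine norm_cfc_le (by positivity) fun s _ => ?_
  have hd : (0:ℝ) < s^2+t^2 := by positivity
  rw [Real.norm_eq_abs, id, abs_mul, abs_of_nonneg (a := t^2/(s^2+t^2)) (by positivity),
    mul_div_assoc', div_le_div_iff₀ hd (by norm_num : (0:ℝ) < 2)]
  nlinarith [sq_nonneg (|s| - t), sq_abs s, abs_nonneg s, ht.le]

lemma katoF_eq (t : ℝ) (ht : 0 < t) (x : A) (hx : IsSelfAdjoint x) :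
    cfc (fun s : ℝ => s^2/(s^2+t^2)) x = 1 - katoQ t x := by
  have h1 : (fun s : ℝ => s^2/(s^2+t^2)) = fun s : ℝ => 1 - t^2/(s^2+t^2) := by
    funext s
    have : s^2+t^2 ≠ 0 := by positivity
    field_simp
    ring
  rw [h1, cfc_sub (fun _ : ℝ => (1:ℝ)) (fun s : ℝ => t^2/(s^2+t^2)) x continuousOn_const
      (cont_div ht.ne' _ continuous_const).continuousOn,
    cfc_const_one ℝ x, katoQ]

lemma katoR_mul' (t : ℝ) (ht : 0 < t) (x : A) (hx : IsSelfAdjoint x) :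
    (x^2 + algebraMap ℝ A (t^2)) * cfc (fun s : ℝ => (s^2+t^2)⁻¹) x = 1 := by
  have h2 : x^2 + algebraMap ℝ A (t^2) = cfc (fun s : ℝ => s^2 + t^2) x := by
    rw [cfc_add_const (t^2) (fun s : ℝ => s^2) x (by fun_prop), cfc_pow_id x 2]
  rw [h2, ← cfc_mul _ _ x (by fun_prop) (cont_den ht.ne').continuousOn]
  have h3 : (fun s : ℝ => (s^2+t^2) * (s^2+t^2)⁻¹) = fun _ : ℝ => (1:ℝ) := by
    funext s
    have : s^2+t^2 ≠ 0 := by positivity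
    field_simp
  rw [h3, cfc_const_one ℝ x]

lemma katoR_mul (t : ℝ) (ht : 0 < t) (x : A) (hx : IsSelfAdjoint x) :
    cfc (fun s : ℝ => (s^2+t^2)⁻¹) x * (x^2 + algebraMap ℝ A (t^2)) = 1 := by
  have h2 : x^2 + algebraMap ℝ A (t^2) = cfc (fun s : ℝ => s^2 + t^2) x := by
    rw [cfc_add_const (t^2) (fun s : ℝ => s^2) x (by fun_prop), cfc_pow_id x 2]
  rw [h2, ← cfc_mul _ _ x (cont_den ht.ne').continuousOn (by fun_prop)]
  have h3 : (fun s : ℝ => (s^2+t^2)⁻¹ * (s^2+t^2)) = fun _ : ℝ => (1:ℝ) := by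
    funext s
    have : s^2+t^2 ≠ 0 := by positivity
    field_simp
  rw [h3, cfc_const_one ℝ x]

lemma katoQ_eq_smul (t : ℝ) (ht : 0 < t) (x : A) :
    katoQ t x = t^2 • cfc (fun s : ℝ => (s^2+t^2)⁻¹) x := by
  rw [katoQ, ← cfc_smul (t^2) _ x (cont_den ht.ne').continuousOn]
  exact cfc_congr fun s _ => by simp [div_eq_mul_inv, smul_eq_mul]

/-- The key algebraic identity for the difference of the resolvent-type elements. -/
lemma katoD_eq (t : ℝ) (ht : 0 < t) (a b : A) (ha : IsSelfAdjoint a) (hb : IsSelfAdjoint b) :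
    katoQ t b - katoQ t a
      = cfc (fun s : ℝ => (s^2+t^2)⁻¹) a * (a^2 - b^2) * katoQ t b := by
  set Ra := cfc (fun s : ℝ => (s^2+t^2)⁻¹) a with hRa
  set Rb := cfc (fun s : ℝ => (s^2+t^2)⁻¹) b with hRb
  have h1 : Ra * (a^2 + algebraMap ℝ A (t^2)) = 1 := katoR_mul t ht a ha
  have h2 : (b^2 + algebraMap ℝ A (t^2)) * Rb = 1 := katoR_mul' t ht b hb
  have hQb : katoQ t b = t^2 • Rb := katoQ_eq_smul t ht b
  have hQa : katoQ t a = t^2 • Ra := katoQ_eq_smul t ht a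
  have expand : a^2 - b^2 = (a^2 + algebraMap ℝ A (t^2)) - (b^2 + algebraMap ℝ A (t^2)) := by
    abel
  rw [expand, hQb, hQa, mul_smul_comm]
  have h3 : Ra * (a^2 + algebraMap ℝ A (t^2) - (b^2 + algebraMap ℝ A (t^2))) * Rb
      = Rb - Ra := by
    rw [mul_sub, sub_mul, mul_assoc Ra (b^2 + algebraMap ℝ A (t^2)) Rb, h2, mul_one, h1, one_mul]
  rw [h3, smul_sub]

lemma katoQ_norm_sub_le_one (t : ℝ) (ht : 0 < t) (a b : A) : ‖katoQ t b - katoQ t a‖ ≤ 1 := by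
  letI := CStarAlgebra.spectralOrder A
  letI := CStarAlgebra.spectralOrderedRing A
  have hQa : IsSelfAdjoint (katoQ t a) := cfc_predicate _ a
  have hQb : IsSelfAdjoint (katoQ t b) := cfc_predicate _ b
  have hu : IsSelfAdjoint (katoQ t b - katoQ t a) := hQb.sub hQa
  have key : ∀ x : A, 0 ≤ katoQ t x ∧ katoQ t x ≤ 1 := by
    intro x
    constructor
    · exact cfc_nonneg fun s _ => by positivity
    · refine cfc_le_one _ _ fun s _ => ?_
      rw [div_le_one (by positivity)]
      nlinarith [sq_nonneg s]
  have hle : katoQ t b - katoQ t a ≤ algebraMap ℝ A 1 := by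
    rw [map_one]
    calc katoQ t b - katoQ t a ≤ katoQ t b - 0 := sub_le_sub_left (key a).1 _
      _ ≤ 1 := by rw [sub_zero]; exact (key b).2
  have hge : algebraMap ℝ A (-1) ≤ katoQ t b - katoQ t a := by
    rw [map_neg, map_one]
    calc (-1 : A) ≤ 0 - katoQ t a := by
          rw [zero_sub, neg_le_neg_iff]; exact (key a).2
      _ ≤ katoQ t b - katoQ t a := sub_le_sub_right (key b).1 _
  nontriviality A
  rcases CStarAlgebra.norm_or_neg_norm_mem_spectrum hu with h | h
  · exact (le_algebraMap_iff_spectrum_le hu).mp hle _ h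
  · have := (algebraMap_le_iff_le_spectrum hu).mp hge _ h
    linarith

lemma katoD_eq_Q (t : ℝ) (ht : 0 < t) (a b : A) (ha : IsSelfAdjoint a) (hb : IsSelfAdjoint b) :
    cfc (fun s : ℝ => s^2/(s^2+t^2)) a - cfc (fun s : ℝ => s^2/(s^2+t^2)) b
      = katoQ t b - katoQ t a := by
  rw [katoF_eq t ht a ha, katoF_eq t ht b hb]; abel

lemma katoD_norm_le_div (t : ℝ) (ht : 0 < t) (a b : A) (ha : IsSelfAdjoint a)
    (hb : IsSelfAdjoint b) : ‖katoQ t b - katoQ t a‖ ≤ ‖a - b‖ / t := by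
  rw [katoD_eq t ht a b ha hb]
  set Ra := cfc (fun s : ℝ => (s^2+t^2)⁻¹) a with hRa
  have split : a^2 - b^2 = a*(a-b) + (a-b)*b := by noncomm_ring
  have regroup : Ra * (a^2 - b^2) * katoQ t b
      = (Ra * a) * ((a-b) * katoQ t b) + Ra * ((a-b) * (b * katoQ t b)) := by
    rw [split]; noncomm_ring
  rw [regroup]
  have h1 : ‖(Ra * a) * ((a-b) * katoQ t b)‖ ≤ (2*t)⁻¹ * (‖a-b‖ * 1) := by
    calc ‖(Ra * a) * ((a-b) * katoQ t b)‖ ≤ ‖Ra * a‖ * ‖(a-b) * katoQ t b‖ := norm_mul_le _ _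
      _ ≤ (2*t)⁻¹ * (‖a-b‖ * 1) := by
          refine mul_le_mul (norm_katoRa_mul_self t ht a ha) ?_ (norm_nonneg _) (by positivity)
          calc ‖(a-b) * katoQ t b‖ ≤ ‖a-b‖ * ‖katoQ t b‖ := norm_mul_le _ _
            _ ≤ ‖a-b‖ * 1 := mul_le_mul_of_nonneg_left (norm_katoQ_le_one t ht b) (norm_nonneg _)
  have h2 : ‖Ra * ((a-b) * (b * katoQ t b))‖ ≤ (t^2)⁻¹ * (‖a-b‖ * (t/2)) := by
    calc ‖Ra * ((a-b) * (b * katoQ t b))‖ ≤ ‖Ra‖ * ‖(a-b) * (b * katoQ t b)‖ := norm_mul_le _ _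
      _ ≤ (t^2)⁻¹ * (‖a-b‖ * (t/2)) := by
          refine mul_le_mul (norm_katoR_le t ht a) ?_ (norm_nonneg _) (by positivity)
          calc ‖(a-b) * (b * katoQ t b)‖ ≤ ‖a-b‖ * ‖b * katoQ t b‖ := norm_mul_le _ _
            _ ≤ ‖a-b‖ * (t/2) :=
                mul_le_mul_of_nonneg_left (norm_self_mul_katoQ t ht b hb) (norm_nonneg _)
  calc ‖(Ra * a) * ((a-b) * katoQ t b) + Ra * ((a-b) * (b * katoQ t b))‖
      ≤ (2*t)⁻¹ * (‖a-b‖ * 1) + (t^2)⁻¹ * (‖a-b‖ * (t/2)) :=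
        (norm_add_le _ _).trans (add_le_add h1 h2)
    _ = ‖a - b‖ / t := by field_simp; ring

lemma katoD_norm_le_sq (t : ℝ) (ht : 0 < t) (a b : A) (ha : IsSelfAdjoint a)
    (hb : IsSelfAdjoint b) :
    ‖katoQ t b - katoQ t a‖ ≤ (‖a‖ + ‖b‖) * ‖a - b‖ / t^2 := by
  rw [katoD_eq t ht a b ha hb]
  set Ra := cfc (fun s : ℝ => (s^2+t^2)⁻¹) a with hRa
  have split : a^2 - b^2 = a*(a-b) + (a-b)*b := by noncomm_ring
  have hsq : ‖a^2 - b^2‖ ≤ (‖a‖ + ‖b‖) * ‖a - b‖ := by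
    rw [split]
    calc ‖a*(a-b) + (a-b)*b‖ ≤ ‖a*(a-b)‖ + ‖(a-b)*b‖ := norm_add_le _ _
      _ ≤ ‖a‖*‖a-b‖ + ‖a-b‖*‖b‖ := add_le_add (norm_mul_le _ _) (norm_mul_le _ _)
      _ = (‖a‖ + ‖b‖) * ‖a - b‖ := by ring
  calc ‖Ra * (a^2-b^2) * katoQ t b‖ ≤ ‖Ra * (a^2-b^2)‖ * ‖katoQ t b‖ := norm_mul_le _ _
    _ ≤ ‖Ra‖ * ‖a^2-b^2‖ * 1 := by
        refine mul_le_mul (norm_mul_le _ _) (norm_katoQ_le_one t ht b) (norm_nonneg _)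
          (by positivity)
    _ ≤ (t^2)⁻¹ * ((‖a‖ + ‖b‖) * ‖a - b‖) * 1 := by
        refine mul_le_mul_of_nonneg_right (mul_le_mul (norm_katoR_le t ht a) hsq
          (norm_nonneg _) (by positivity)) zero_le_one
    _ = (‖a‖ + ‖b‖) * ‖a - b‖ / t^2 := by field_simp

/-- Combined bound on the integrand. -/
lemma katoD_eq_Q' (t : ℝ) (ht : 0 < t) (a b : A)
    (ha : IsSelfAdjoint a) (hb : IsSelfAdjoint b) (c : ℝ)
    (h1 : ‖a - b‖ / t ≤ c ∨ 1 ≤ c ∨ (‖a‖+‖b‖) * ‖a - b‖ / t^2 ≤ c) :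
    ‖cfc (fun s : ℝ => s^2/(s^2+t^2)) a - cfc (fun s : ℝ => s^2/(s^2+t^2)) b‖ ≤ c := by
  rw [katoD_eq_Q t ht a b ha hb]
  rcases h1 with h | h | h
  · exact (katoD_norm_le_div t ht a b ha hb).trans h
  · exact (katoQ_norm_sub_le_one t ht a b).trans h
  · exact (katoD_norm_le_sq t ht a b ha hb).trans h

/-! ### The interchange of `cfc` and the interval integral -/

/-- `cfcHom` as a continuous linear map. -/
noncomputable def myCfcL {x : A} (hx : IsSelfAdjoint x) : C(spectrum ℝ x, ℝ) →L[ℝ] A where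
  toFun := cfcHom hx
  map_add' := map_add _
  map_smul' := map_smul _
  cont := (isometry_cfcHom x hx).continuous

lemma cfcL_norm {x : A} (hx : IsSelfAdjoint x) (g : C(spectrum ℝ x, ℝ)) :
    ‖myCfcL hx g‖ = ‖g‖ :=
  (isometry_cfcHom x hx).norm_map_of_map_zero (map_zero _) g

/-- The clamped integrand as a jointly continuous map. -/
noncomputable def katoH (x : A) (ε : ℝ) (hε : 0 < ε) : C(ℝ × spectrum ℝ x, ℝ) :=
  ⟨fun p => (p.2 : ℝ)^2 / ((p.2 : ℝ)^2 + (max p.1 ε)^2), by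
    apply Continuous.div
    · fun_prop
    · fun_prop
    · intro p
      have h1 : ε ≤ max p.1 ε := le_max_right _ _
      positivity⟩

lemma katoH_apply (x : A) (ε : ℝ) (hε : 0 < ε) (t : ℝ) (ht : ε ≤ t) (s : spectrum ℝ x) :
    (ContinuousMap.curry (katoH x ε hε)) t s = (s : ℝ)^2 / ((s : ℝ)^2 + t^2) := by
  simp [katoH, max_eq_left ht]

lemma kato_cfc_eq (x : A) (hx : IsSelfAdjoint x) (ε : ℝ) (hε : 0 < ε) (t : ℝ) (ht : ε ≤ t) :
    cfc (fun s : ℝ => s^2/(s^2+t^2)) x = myCfcL hx ((ContinuousMap.curry (katoH x ε hε)) t) := by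
  have ht0 : 0 < t := lt_of_lt_of_le hε ht
  have hcont : ContinuousOn (fun s : ℝ => s^2/(s^2+t^2)) (spectrum ℝ x) := by
    apply Continuous.continuousOn
    exact (continuous_pow 2).div (by fun_prop) (fun s => by positivity)
  rw [cfc_apply (fun s : ℝ => s^2/(s^2+t^2)) x hx hcont]
  show cfcHom hx _ = cfcHom hx _
  congr 1
  exact ContinuousMap.ext fun s => by simpa using (katoH_apply x ε hε t ht s).symm

lemma kato_integral_eq (x : A) (hx : IsSelfAdjoint x) {ε T : ℝ} (hε : 0 < ε) (hT : ε ≤ T) :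
    ∫ t in ε..T, cfc (fun s : ℝ => s^2/(s^2+t^2)) x
      = myCfcL hx (∫ t in ε..T, (ContinuousMap.curry (katoH x ε hε)) t) := by
  have hint : IntervalIntegrable (fun t => (ContinuousMap.curry (katoH x ε hε)) t)
      volume ε T := ((ContinuousMap.curry (katoH x ε hε)).continuous).intervalIntegrable ε T
  rw [← ContinuousLinearMap.intervalIntegral_comp_comm _ hint]
  apply integral_congr
  intro t ht
  rw [Set.uIcc_of_le hT] at ht
  exact kato_cfc_eq x hx ε hε t ht.1

lemma kato_integrable (x : A) (hx : IsSelfAdjoint x) {u v : ℝ} (hu : 0 < u) (huv : u ≤ v) :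
    IntervalIntegrable (fun t => cfc (fun s : ℝ => s^2/(s^2+t^2)) x) volume u v := by
  apply ContinuousOn.intervalIntegrable
  apply ContinuousOn.congr (f := fun t => myCfcL hx ((ContinuousMap.curry (katoH x u hu)) t))
  · exact ((myCfcL hx).continuous.comp
      (ContinuousMap.curry (katoH x u hu)).continuous).continuousOn
  · intro t ht
    rw [Set.uIcc_of_le huv] at ht
    exact kato_cfc_eq x hx u hu t ht.1

/-- Approximation of the absolute value by the truncated integral. -/
lemma kato_approx (x : A) (hx : IsSelfAdjoint x) {ε T : ℝ} (hε : 0 < ε) (hT : ε ≤ T) :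
    ‖cfc (fun s : ℝ => |s|) x - (2/π) • ∫ t in ε..T, cfc (fun s : ℝ => s^2/(s^2+t^2)) x‖
      ≤ (2/π) * (ε + ‖x‖^2 / T) := by
  have hT0 : 0 < T := lt_of_lt_of_le hε hT
  rcases subsingleton_or_nontrivial A with hA | hA
  · have hπ := Real.pi_pos
    rw [Subsingleton.elim (cfc (fun s : ℝ => |s|) x
      - (2/π) • ∫ t in ε..T, cfc (fun s : ℝ => s^2/(s^2+t^2)) x) 0, norm_zero]
    positivity
  have habs : cfc (fun s : ℝ => |s|) x
      = myCfcL hx ⟨(spectrum ℝ x).restrict (fun s : ℝ => |s|), continuous_abs.continuousOn.restrict⟩ := by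
    rw [cfc_apply (fun s : ℝ => |s|) x hx (by fun_prop)]
    rfl
  rw [kato_integral_eq x hx hε hT, habs, ← _root_.map_smul, ← map_sub, cfcL_norm]
  set g := (⟨(spectrum ℝ x).restrict (fun s : ℝ => |s|), continuous_abs.continuousOn.restrict⟩ : C(spectrum ℝ x, ℝ))
    - (2/π) • ∫ t in ε..T, (ContinuousMap.curry (katoH x ε hε)) t with hg
  refine (ContinuousMap.norm_le _ (by positivity)).mpr fun s => ?_
  have hint : IntervalIntegrable (fun t => (ContinuousMap.curry (katoH x ε hε)) t)
      volume ε T := ((ContinuousMap.curry (katoH x ε hε)).continuous).intervalIntegrable ε T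
  have heval : (∫ t in ε..T, (ContinuousMap.curry (katoH x ε hε)) t) s
      = ∫ t in ε..T, (s:ℝ)^2/((s:ℝ)^2+t^2) := by
    have h1 := (ContinuousMap.evalCLM ℝ s).intervalIntegral_comp_comm hint
    have h2 : (ContinuousMap.evalCLM ℝ s) (∫ t in ε..T, (ContinuousMap.curry (katoH x ε hε)) t)
        = (∫ t in ε..T, (ContinuousMap.curry (katoH x ε hε)) t) s := rfl
    rw [← h2, ← h1]
    apply integral_congr
    intro t ht
    rw [Set.uIcc_of_le hT] at ht
    exact katoH_apply x ε hε t ht.1 s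
  have hgs : g s = |(s:ℝ)| - (2/π) * ∫ t in ε..T, (s:ℝ)^2/((s:ℝ)^2+t^2) := by
    simp [hg, heval]
    rfl
  rw [Real.norm_eq_abs, hgs]
  obtain ⟨h0, h1⟩ := kato_scalar (s := (s:ℝ)) hε hT
  rw [abs_of_nonneg h0]
  refine h1.trans ?_
  have hs2 : (s:ℝ)^2 ≤ ‖x‖^2 := by
    have := spectrum.norm_le_norm_of_mem s.2
    rw [Real.norm_eq_abs] at this
    nlinarith [abs_nonneg (s:ℝ), sq_abs (s:ℝ)]
  have hdiv : (s:ℝ)^2/T ≤ ‖x‖^2/T := by gcongr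
  have hπ := Real.pi_pos
  apply mul_le_mul_of_nonneg_left (by linarith) (by positivity)

/-! ### The middle integral bound -/

lemma kato_mid (a b : A) (ha : IsSelfAdjoint a) (hb : IsSelfAdjoint b)
    {ε T : ℝ} (hε : 0 < ε) (hεδ : ε ≤ ‖a - b‖) (hδM : ‖a - b‖ ≤ ‖a‖ + ‖b‖)
    (hMT : ‖a‖ + ‖b‖ ≤ T) :
    ‖∫ t in ε..T, (cfc (fun s : ℝ => s^2/(s^2+t^2)) a - cfc (fun s : ℝ => s^2/(s^2+t^2)) b)‖
      ≤ 2 * ‖a - b‖ + ‖a - b‖ * Real.log ((‖a‖ + ‖b‖) / ‖a - b‖) := by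
  set δ := ‖a - b‖ with hδ
  set M := ‖a‖ + ‖b‖ with hM
  have hδ0 : 0 < δ := lt_of_lt_of_le hε hεδ
  have hM0 : 0 < M := lt_of_lt_of_le hδ0 hδM
  set D := fun t : ℝ => cfc (fun s : ℝ => s^2/(s^2+t^2)) a - cfc (fun s : ℝ => s^2/(s^2+t^2)) b
    with hD
  have hint : ∀ u v : ℝ, 0 < u → u ≤ v → IntervalIntegrable D volume u v := fun u v hu huv =>
    (kato_integrable a ha hu huv).sub (kato_integrable b hb hu huv)
  have hsplit : ∫ t in ε..T, D t = (∫ t in ε..δ, D t) + (∫ t in δ..M, D t)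
      + (∫ t in M..T, D t) := by
    rw [integral_add_adjacent_intervals (hint ε δ hε hεδ) (hint δ M hδ0 hδM),
      integral_add_adjacent_intervals (hint ε M hε (hεδ.trans hδM)) (hint M T hM0 hMT)]
  have B1 : ‖∫ t in ε..δ, D t‖ ≤ δ := by
    have := norm_integral_le_of_norm_le_const (C := 1) (f := D) (a := ε) (b := δ) ?_
    · calc ‖∫ t in ε..δ, D t‖ ≤ 1 * |δ - ε| := this
        _ ≤ δ := by rw [one_mul, abs_of_nonneg (by linarith)]; linarith
    · intro t ht
      rw [Set.uIoc_of_le hεδ] at ht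
      exact katoD_eq_Q' t (lt_of_lt_of_le hε ht.1.le) a b ha hb 1 (Or.inr (Or.inl le_rfl))
  have B2 : ‖∫ t in δ..M, D t‖ ≤ δ * Real.log (M / δ) := by
    have hbound : ∀ᵐ t ∂(volume.restrict (Set.uIoc δ M)), ‖D t‖ ≤ δ * t⁻¹ := by
      refine (MeasureTheory.ae_restrict_mem measurableSet_uIoc).mono fun t ht => ?_
      rw [Set.uIoc_of_le hδM] at ht
      have ht0 : 0 < t := lt_trans hδ0 ht.1
      have := katoD_eq_Q' t ht0 a b ha hb (δ/t) (Or.inl le_rfl)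
      calc ‖D t‖ ≤ δ / t := this
        _ = δ * t⁻¹ := div_eq_mul_inv _ _
    have hgint : IntervalIntegrable (fun t : ℝ => δ * t⁻¹) volume δ M := by
      apply ContinuousOn.intervalIntegrable
      apply ContinuousOn.mul continuousOn_const
      apply ContinuousOn.inv₀ continuousOn_id
      intro t ht
      rw [Set.uIcc_of_le hδM] at ht
      exact (lt_of_lt_of_le hδ0 ht.1).ne'
    have hcalc : ∫ t in δ..M, δ * t⁻¹ = δ * Real.log (M / δ) := by
      rw [intervalIntegral.integral_const_mul, integral_inv]
      rw [Set.uIcc_of_le hδM]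
      intro h
      exact absurd h.1 (not_le.mpr hδ0)
    have := norm_integral_le_abs_of_norm_le hbound hgint
    rwa [hcalc, abs_of_nonneg (by
      have h1 : (1:ℝ) ≤ M / δ := (one_le_div hδ0).mpr hδM
      have h2 := Real.log_nonneg h1
      positivity)] at this
  have B3 : ‖∫ t in M..T, D t‖ ≤ δ := by
    have hbound : ∀ᵐ t ∂(volume.restrict (Set.uIoc M T)), ‖D t‖ ≤ M * δ / t^2 := by
      refine (MeasureTheory.ae_restrict_mem measurableSet_uIoc).mono fun t ht => ?_
      rw [Set.uIoc_of_le hMT] at ht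
      have ht0 : 0 < t := lt_trans hM0 ht.1
      exact katoD_eq_Q' t ht0 a b ha hb (M * δ / t^2) (Or.inr (Or.inr le_rfl))
    have hgint : IntervalIntegrable (fun t : ℝ => M * δ / t^2) volume M T := by
      apply ContinuousOn.intervalIntegrable
      apply ContinuousOn.div continuousOn_const (by fun_prop)
      intro t ht
      rw [Set.uIcc_of_le hMT] at ht
      have : 0 < t := lt_of_lt_of_le hM0 ht.1
      positivity
    have hcalc : ∫ t in M..T, M * δ / t^2 = M * δ * M⁻¹ - M * δ * T⁻¹ := by
      have hderiv : ∀ t ∈ Set.uIcc M T, HasDerivAt (fun y : ℝ => -(M*δ) * y⁻¹)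
          (M * δ / t^2) t := by
        intro t ht
        rw [Set.uIcc_of_le hMT] at ht
        have ht0 : 0 < t := lt_of_lt_of_le hM0 ht.1
        have h1 := (hasDerivAt_inv ht0.ne').const_mul (-(M*δ))
        refine h1.congr_deriv ?_
        field_simp
      rw [integral_eq_sub_of_hasDerivAt hderiv hgint]
      ring
    have hval : |∫ t in M..T, M * δ / t^2| ≤ δ := by
      rw [hcalc]
      have h1 : M * δ * M⁻¹ = δ := by field_simp
      have hT0 : 0 < T := lt_of_lt_of_le hM0 hMT
      have h2 : 0 ≤ M * δ * T⁻¹ := by positivity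
      have h3 : M * δ * T⁻¹ ≤ δ := by
        rw [mul_inv_le_iff₀ hT0]
        nlinarith
      rw [abs_le]
      constructor <;> nlinarith
    exact (norm_integral_le_abs_of_norm_le hbound hgint).trans hval
  calc ‖∫ t in ε..T, D t‖ ≤ δ + δ * Real.log (M / δ) + δ := by
        rw [hsplit]
        exact (norm_add_le _ _).trans (add_le_add ((norm_add_le _ _).trans
          (add_le_add B1 B2)) B3)
    _ = 2 * δ + δ * Real.log (M / δ) := by ring

end KatoAux

set_option maxHeartbeats 1000000 in
/-- Kato's inequality: if `a`, `b` are selfadjoint with `a ≠ b`, then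
`‖|a| - |b|‖ ≤ (2/π)(2 + log((‖a‖+‖b‖)/‖a-b‖))·‖a-b‖`. -/
theorem stmt_1 {A : Type*} [CStarAlgebra A]
    (a b : A) (ha : IsSelfAdjoint a) (hb : IsSelfAdjoint b) (hne : a ≠ b) :
    ‖cstarAbs a - cstarAbs b‖ ≤
      (2 / Real.pi) * (2 + Real.log ((‖a‖ + ‖b‖) / ‖a - b‖)) * ‖a - b‖ := by
  unfold cstarAbs
  set δ := ‖a - b‖ with hδdef
  set M := ‖a‖ + ‖b‖ with hMdef
  have hδ0 : 0 < δ := norm_pos_iff.mpr (sub_ne_zero.mpr hne)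
  have hδM : δ ≤ M := norm_sub_le a b
  have hM0 : 0 < M := lt_of_lt_of_le hδ0 hδM
  have hπ := Real.pi_pos
  have hπ3 := Real.pi_gt_three
  refine le_of_forall_pos_le_add fun η hη => ?_
  set ε := min δ (η/4) with hεdef
  have hε0 : 0 < ε := lt_min hδ0 (by linarith)
  have hεδ : ε ≤ δ := min_le_left _ _
  have hεη : ε ≤ η/4 := min_le_right _ _
  set S := ‖a‖^2 + ‖b‖^2 with hSdef
  have hS0 : 0 ≤ S := by positivity
  set T := max M (2*S/η + 1) with hTdef
  have hMT : M ≤ T := le_max_left _ _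
  have hT0 : 0 < T := lt_of_lt_of_le hM0 hMT
  have hT2 : 2*S/η + 1 ≤ T := le_max_right _ _
  have hST : S/T ≤ η/2 := by
    rw [div_le_iff₀ hT0]
    have : η * (2*S/η + 1) = 2*S + η := by field_simp
    nlinarith
  have hεT : ε ≤ T := hεδ.trans (hδM.trans hMT)
  -- the three pieces
  have hIa := kato_approx a ha hε0 hεT
  have hIb := kato_approx b hb hε0 hεT
  have hMid := kato_mid a b ha hb hε0 hεδ hδM hMT
  set Ia := ∫ t in ε..T, cfc (fun s : ℝ => s^2/(s^2+t^2)) a with hIadef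
  set Ib := ∫ t in ε..T, cfc (fun s : ℝ => s^2/(s^2+t^2)) b with hIbdef
  have hIsub : Ia - Ib = ∫ t in ε..T,
      (cfc (fun s : ℝ => s^2/(s^2+t^2)) a - cfc (fun s : ℝ => s^2/(s^2+t^2)) b) := by
    rw [hIadef, hIbdef, intervalIntegral.integral_sub (kato_integrable a ha hε0 hεT)
      (kato_integrable b hb hε0 hεT)]
  have hkey : cfc (fun s : ℝ => |s|) a - cfc (fun s : ℝ => |s|) b
      = (cfc (fun s : ℝ => |s|) a - (2/Real.pi) • Ia) - (cfc (fun s : ℝ => |s|) b - (2/Real.pi) • Ib)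
        + (2/Real.pi) • (Ia - Ib) := by
    rw [smul_sub]; abel
  have hnorm : ‖cfc (fun s : ℝ => |s|) a - cfc (fun s : ℝ => |s|) b‖
      ≤ ‖cfc (fun s : ℝ => |s|) a - (2/Real.pi) • Ia‖ + ‖cfc (fun s : ℝ => |s|) b - (2/Real.pi) • Ib‖
        + (2/Real.pi) * ‖Ia - Ib‖ := by
    rw [hkey]
    refine (norm_add_le _ _).trans (add_le_add ((norm_sub_le _ _).trans le_rfl) ?_)
    rw [norm_smul, Real.norm_eq_abs, abs_of_nonneg (by positivity)]
  have hMid' : (2/Real.pi) * ‖Ia - Ib‖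
      ≤ (2/Real.pi) * (2*δ + δ * Real.log (M/δ)) := by
    apply mul_le_mul_of_nonneg_left _ (by positivity)
    rw [hIsub]
    exact hMid
  have hfinal : ‖cfc (fun s : ℝ => |s|) a - cfc (fun s : ℝ => |s|) b‖
      ≤ (2/Real.pi) * (ε + ‖a‖^2/T) + (2/Real.pi) * (ε + ‖b‖^2/T)
        + (2/Real.pi) * (2*δ + δ * Real.log (M/δ)) :=
    hnorm.trans (add_le_add (add_le_add hIa hIb) hMid')
  have harr : (2/Real.pi) * (ε + ‖a‖^2/T) + (2/Real.pi) * (ε + ‖b‖^2/T)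
      = (2/Real.pi) * (2*ε) + (2/Real.pi) * (S/T) := by
    rw [hSdef]; field_simp; ring
  have h2π : 2/Real.pi ≤ 1 := by
    rw [div_le_one hπ]; linarith
  have hεbound : (2/Real.pi) * (2*ε) ≤ η/2 := by
    have h1 : (2/Real.pi) * (2*ε) ≤ 1 * (2*ε) :=
      mul_le_mul_of_nonneg_right h2π (by positivity)
    nlinarith
  have hSbound : (2/Real.pi) * (S/T) ≤ η/2 := by
    have h1 : (2/Real.pi) * (S/T) ≤ 1 * (S/T) :=
      mul_le_mul_of_nonneg_right h2π (by positivity)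
    nlinarith
  have htarget : (2/Real.pi) * (2*δ + δ * Real.log (M/δ))
      = (2/Real.pi) * (2 + Real.log (M/δ)) * δ := by ring
  calc ‖cfc (fun s : ℝ => |s|) a - cfc (fun s : ℝ => |s|) b‖
      ≤ (2/Real.pi) * (2*ε) + (2/Real.pi) * (S/T)
        + (2/Real.pi) * (2*δ + δ * Real.log (M/δ)) := by
        rw [← harr]; exact hfinal
    _ ≤ (2/Real.pi) * (2 + Real.log (M/δ)) * δ + η := by
        rw [← htarget]; linarith
end

section
/- Let B₊ and B₋ be continuous functions from a compact space X to the selfadjoint N×N complex matrices with 0 ≤ B± ≤ 1, ‖(B± - B±²)(B₊ - B₋)‖ < δ (for both signs), and ‖(B₊ - B₊²) - (B₋ - B₋²)‖ < δ, where 0 < δ < 1. Define κ(t) = √(t - t²) (applied by functional calculus) and let Q be the 2N×2N matrix-valued function with blocks Q₁₁ = 1 - B₊, Q₁₂ = Q₂₁ = κ(B₊), Q₂₂ = B₋. Then ‖Q - Q²‖ < 3√δ. -/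
open scoped Matrix.Norms.L2Operator ComplexOrder

section StmtAux

open scoped Matrix

variable {N : ℕ}

/-- The `N×N` complex matrices with the `L²` operator norm form a C⋆-algebra. -/
noncomputable def stmt2.matCStar (N : ℕ) : CStarAlgebra (Matrix (Fin N) (Fin N) ℂ) :=
  { Matrix.instL2OpNormedRing, Matrix.instL2OpNormedAlgebra,
    (inferInstance : StarRing (Matrix (Fin N) (Fin N) ℂ)), Matrix.instCStarRing,
    (inferInstance : StarModule ℂ (Matrix (Fin N) (Fin N) ℂ)),
    (FiniteDimensional.complete ℂ (Matrix (Fin N) (Fin N) ℂ) : CompleteSpace _) with }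

lemma stmt2.spec_nonneg {A : Matrix (Fin N) (Fin N) ℂ} (hA : A.PosSemidef) {μ : ℝ}
    (hμ : μ ∈ spectrum ℝ A) : 0 ≤ μ := by
  classical
  rw [hA.isHermitian.spectrum_real_eq_range_eigenvalues] at hμ
  obtain ⟨i, rfl⟩ := hμ
  exact hA.eigenvalues_nonneg i

lemma stmt2.one_sub_mem_spec {A : Matrix (Fin N) (Fin N) ℂ} {μ : ℝ}
    (hμ : μ ∈ spectrum ℝ A) : 1 - μ ∈ spectrum ℝ (1 - A) := by
  rw [spectrum.mem_iff] at hμ ⊢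
  intro h
  apply hμ
  have key : algebraMap ℝ (Matrix (Fin N) (Fin N) ℂ) (1 - μ) - (1 - A)
      = -(algebraMap ℝ (Matrix (Fin N) (Fin N) ℂ) μ - A) := by
    rw [map_sub, map_one]; abel
  rw [key] at h
  simpa using h.neg

lemma stmt2.one_add_mem_spec {A : Matrix (Fin N) (Fin N) ℂ} {μ : ℝ}
    (hμ : μ ∈ spectrum ℝ A) : 1 + μ ∈ spectrum ℝ (1 + A) := by
  rw [spectrum.mem_iff] at hμ ⊢
  intro h
  apply hμ
  have key : algebraMap ℝ (Matrix (Fin N) (Fin N) ℂ) (1 + μ) - (1 + A)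
      = algebraMap ℝ (Matrix (Fin N) (Fin N) ℂ) μ - A := by
    rw [map_add, map_one]; abel
  rwa [key] at h

lemma stmt2.norm_le_one {D : Matrix (Fin N) (Fin N) ℂ} (hD : IsSelfAdjoint D)
    (h1 : (1 - D).PosSemidef) (h2 : (1 + D).PosSemidef) : ‖D‖ ≤ 1 := by
  letI := stmt2.matCStar N
  rw [← cfc_id ℝ D hD]
  refine norm_cfc_le zero_le_one fun μ hμ => ?_
  have a1 : 0 ≤ 1 - μ := stmt2.spec_nonneg h1 (stmt2.one_sub_mem_spec hμ)
  have a2 : 0 ≤ 1 + μ := stmt2.spec_nonneg h2 (stmt2.one_add_mem_spec hμ)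
  rw [id_eq, Real.norm_eq_abs, abs_le]
  constructor <;> linarith

lemma stmt2.cfc_facts {P : Matrix (Fin N) (Fin N) ℂ} (h0 : P.PosSemidef)
    (h1 : (1 - P).PosSemidef) :
    IsSelfAdjoint (cfc (fun t : ℝ => Real.sqrt (t - t ^ 2)) P) ∧
    (cfc (fun t : ℝ => Real.sqrt (t - t ^ 2)) P) * (cfc (fun t : ℝ => Real.sqrt (t - t ^ 2)) P)
      = P - P ^ 2 ∧
    P * (cfc (fun t : ℝ => Real.sqrt (t - t ^ 2)) P)
      = (cfc (fun t : ℝ => Real.sqrt (t - t ^ 2)) P) * P := by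
  have hsa : IsSelfAdjoint P := h0.1.isSelfAdjoint
  have hspec : ∀ t ∈ spectrum ℝ P, 0 ≤ t ∧ t ≤ 1 := by
    intro t ht
    have h01 := stmt2.spec_nonneg h0 ht
    have h02 := stmt2.spec_nonneg h1 (stmt2.one_sub_mem_spec ht)
    exact ⟨h01, by linarith⟩
  refine ⟨cfc_predicate _ P, ?_, ?_⟩
  · have hc : ContinuousOn (fun t : ℝ => Real.sqrt (t - t ^ 2)) (spectrum ℝ P) := by fun_prop
    rw [← cfc_mul _ _ P hc hc]
    calc cfc (fun t : ℝ => Real.sqrt (t - t ^ 2) * Real.sqrt (t - t ^ 2)) P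
        = cfc (fun t : ℝ => t - t ^ 2) P := by
          refine cfc_congr fun t ht => ?_
          obtain ⟨ht0, ht1⟩ := hspec t ht
          exact Real.mul_self_sqrt (by nlinarith)
      _ = P - P ^ 2 := by
          rw [cfc_sub (fun t : ℝ => t) (fun t : ℝ => t ^ 2) P, cfc_id' ℝ P, cfc_pow_id P 2]
  · have := cfc_commute_cfc (R := ℝ) (fun t : ℝ => t) (fun t => Real.sqrt (t - t ^ 2)) P
    rw [cfc_id' ℝ P] at this
    exact this.eq

lemma stmt2.euclid_norm_elim_left (c : Fin N → ℂ) :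
    ‖((WithLp.equiv 2 _).symm (Sum.elim c (0 : Fin N → ℂ)) :
      EuclideanSpace ℂ (Fin N ⊕ Fin N))‖
      = ‖((WithLp.equiv 2 _).symm c : EuclideanSpace ℂ (Fin N))‖ := by
  simp only [EuclideanSpace.norm_eq, WithLp.equiv_symm_apply, PiLp.toLp_apply]
  congr 1
  rw [Fintype.sum_sum_type]
  simp

lemma stmt2.euclid_norm_elim_right (c : Fin N → ℂ) :
    ‖((WithLp.equiv 2 _).symm (Sum.elim (0 : Fin N → ℂ) c) :
      EuclideanSpace ℂ (Fin N ⊕ Fin N))‖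
      = ‖((WithLp.equiv 2 _).symm c : EuclideanSpace ℂ (Fin N))‖ := by
  simp only [EuclideanSpace.norm_eq, WithLp.equiv_symm_apply, PiLp.toLp_apply]
  congr 1
  rw [Fintype.sum_sum_type]
  simp

lemma stmt2.euclid_norm_comp_inr (u : Fin N ⊕ Fin N → ℂ) :
    ‖((WithLp.equiv 2 _).symm (u ∘ Sum.inr) : EuclideanSpace ℂ (Fin N))‖
      ≤ ‖((WithLp.equiv 2 _).symm u : EuclideanSpace ℂ (Fin N ⊕ Fin N))‖ := by
  simp only [EuclideanSpace.norm_eq, WithLp.equiv_symm_apply, PiLp.toLp_apply]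
  apply Real.sqrt_le_sqrt
  rw [Fintype.sum_sum_type]
  have : (0:ℝ) ≤ ∑ b : Fin N, ‖u (Sum.inl b)‖ ^ 2 := by positivity
  simp only [Function.comp_apply]
  linarith

lemma stmt2.norm_fromBlocks₁₂_le (B : Matrix (Fin N) (Fin N) ℂ) :
    ‖Matrix.fromBlocks (0 : Matrix (Fin N) (Fin N) ℂ) B
      (0 : Matrix (Fin N) (Fin N) ℂ) (0 : Matrix (Fin N) (Fin N) ℂ)‖ ≤ ‖B‖ := by
  rw [Matrix.l2_opNorm_def]
  refine ContinuousLinearMap.opNorm_le_bound _ (norm_nonneg _) fun v => ?_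
  show ‖Matrix.toEuclideanLin _ v‖ ≤ _
  set u : Fin N ⊕ Fin N → ℂ := WithLp.equiv 2 _ v with hu
  have hv : v = (WithLp.equiv 2 _).symm u := by simp [hu]
  have hmul : (Matrix.fromBlocks (0 : Matrix (Fin N) (Fin N) ℂ) B 0 0) *ᵥ u
      = Sum.elim (B *ᵥ (u ∘ Sum.inr)) (0 : Fin N → ℂ) := by
    conv_lhs => rw [← Sum.elim_comp_inl_inr u]
    rw [Matrix.fromBlocks_mulVec]
    simp
  rw [hv, WithLp.equiv_symm_apply, Matrix.toEuclideanLin_apply_piLp_toLp, ← WithLp.equiv_symm_apply, hmul, stmt2.euclid_norm_elim_left]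
  calc ‖((WithLp.equiv 2 _).symm (B *ᵥ (u ∘ Sum.inr)) : EuclideanSpace ℂ (Fin N))‖
      ≤ ‖B‖ * ‖((WithLp.equiv 2 _).symm (u ∘ Sum.inr) : EuclideanSpace ℂ (Fin N))‖ := by
        simpa using Matrix.l2_opNorm_mulVec B ((WithLp.equiv 2 _).symm (u ∘ Sum.inr))
    _ ≤ ‖B‖ * ‖v‖ := by
        rw [hv]
        exact mul_le_mul_of_nonneg_left (stmt2.euclid_norm_comp_inr u) (norm_nonneg _)

lemma stmt2.norm_fromBlocks₂₂_le (D : Matrix (Fin N) (Fin N) ℂ) :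
    ‖Matrix.fromBlocks (0 : Matrix (Fin N) (Fin N) ℂ) (0 : Matrix (Fin N) (Fin N) ℂ)
      (0 : Matrix (Fin N) (Fin N) ℂ) D‖ ≤ ‖D‖ := by
  rw [Matrix.l2_opNorm_def]
  refine ContinuousLinearMap.opNorm_le_bound _ (norm_nonneg _) fun v => ?_
  show ‖Matrix.toEuclideanLin _ v‖ ≤ _
  set u : Fin N ⊕ Fin N → ℂ := WithLp.equiv 2 _ v with hu
  have hv : v = (WithLp.equiv 2 _).symm u := by simp [hu]
  have hmul : (Matrix.fromBlocks (0 : Matrix (Fin N) (Fin N) ℂ) 0 0 D) *ᵥ u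
      = Sum.elim (0 : Fin N → ℂ) (D *ᵥ (u ∘ Sum.inr)) := by
    conv_lhs => rw [← Sum.elim_comp_inl_inr u]
    rw [Matrix.fromBlocks_mulVec]
    simp
  rw [hv, WithLp.equiv_symm_apply, Matrix.toEuclideanLin_apply_piLp_toLp, ← WithLp.equiv_symm_apply, hmul, stmt2.euclid_norm_elim_right]
  calc ‖((WithLp.equiv 2 _).symm (D *ᵥ (u ∘ Sum.inr)) : EuclideanSpace ℂ (Fin N))‖
      ≤ ‖D‖ * ‖((WithLp.equiv 2 _).symm (u ∘ Sum.inr) : EuclideanSpace ℂ (Fin N))‖ := by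
        simpa using Matrix.l2_opNorm_mulVec D ((WithLp.equiv 2 _).symm (u ∘ Sum.inr))
    _ ≤ ‖D‖ * ‖v‖ := by
        rw [hv]
        exact mul_le_mul_of_nonneg_left (stmt2.euclid_norm_comp_inr u) (norm_nonneg _)

lemma stmt2.norm_fromBlocks₂₁_le (C : Matrix (Fin N) (Fin N) ℂ) :
    ‖Matrix.fromBlocks (0 : Matrix (Fin N) (Fin N) ℂ) (0 : Matrix (Fin N) (Fin N) ℂ)
      C (0 : Matrix (Fin N) (Fin N) ℂ)‖ ≤ ‖C‖ := by
  have key : Matrix.fromBlocks (0 : Matrix (Fin N) (Fin N) ℂ) (0 : Matrix (Fin N) (Fin N) ℂ)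
      C (0 : Matrix (Fin N) (Fin N) ℂ)
      = (Matrix.fromBlocks (0 : Matrix (Fin N) (Fin N) ℂ) Cᴴ
        (0 : Matrix (Fin N) (Fin N) ℂ) (0 : Matrix (Fin N) (Fin N) ℂ))ᴴ := by
    rw [Matrix.fromBlocks_conjTranspose]
    simp
  rw [key, Matrix.l2_opNorm_conjTranspose]
  calc ‖Matrix.fromBlocks (0 : Matrix (Fin N) (Fin N) ℂ) Cᴴ
        (0 : Matrix (Fin N) (Fin N) ℂ) (0 : Matrix (Fin N) (Fin N) ℂ)‖ ≤ ‖Cᴴ‖ :=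
      stmt2.norm_fromBlocks₁₂_le Cᴴ
    _ = ‖C‖ := Matrix.l2_opNorm_conjTranspose C

lemma stmt2.fromBlocks_sub (A B C D A' B' C' D' : Matrix (Fin N) (Fin N) ℂ) :
    Matrix.fromBlocks A B C D - Matrix.fromBlocks A' B' C' D'
      = Matrix.fromBlocks (A - A') (B - B') (C - C') (D - D') := by
  simp [sub_eq_add_neg, Matrix.fromBlocks_neg, Matrix.fromBlocks_add]

end StmtAux

open scoped Matrix

set_option maxHeartbeats 1600000

/-- Let `Bp`, `Bm` be continuous functions from a compact space `X` to the selfadjoint `N×N`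
matrices with `0 ≤ B± ≤ 1` pointwise, `‖(B± - B±²)(Bp - Bm)‖ < δ` for both signs, and
`‖(Bp - Bp²) - (Bm - Bm²)‖ < δ`, where `0 < δ < 1`.  With `κ(t) = √(t - t²)` applied via
the continuous functional calculus, and `Q` the `2N×2N` matrix-valued function with blocks
`Q₁₁ = 1 - Bp`, `Q₁₂ = Q₂₁ = κ(Bp)`, `Q₂₂ = Bm`, one has `‖Q - Q²‖ < 3√δ`.
Norms are supremum `L²` operator norms on `C(X, M_N)` and `C(X, M_{2N})`. -/
theorem stmt_2 {N : ℕ} {X : Type*} [TopologicalSpace X] [CompactSpace X]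
    (Bp Bm : C(X, Matrix (Fin N) (Fin N) ℂ))
    (hp0 : ∀ x, (Bp x).PosSemidef) (hp1 : ∀ x, (1 - Bp x).PosSemidef)
    (hm0 : ∀ x, (Bm x).PosSemidef) (hm1 : ∀ x, (1 - Bm x).PosSemidef)
    (δ : ℝ) (hδ0 : 0 < δ) (hδ1 : δ < 1)
    (h1 : ‖(Bp - Bp ^ 2) * (Bp - Bm)‖ < δ)
    (h2 : ‖(Bm - Bm ^ 2) * (Bp - Bm)‖ < δ)
    (h3 : ‖(Bp - Bp ^ 2) - (Bm - Bm ^ 2)‖ < δ)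
    (K : C(X, Matrix (Fin N) (Fin N) ℂ))
    (hK : ∀ x, K x = cfc (fun t : ℝ => Real.sqrt (t - t ^ 2)) (Bp x))
    (Q : C(X, Matrix (Fin N ⊕ Fin N) (Fin N ⊕ Fin N) ℂ))
    (hQ : ∀ x, Q x = Matrix.fromBlocks (1 - Bp x) (K x) (K x) (Bm x)) :
    ‖Q - Q ^ 2‖ < 3 * Real.sqrt δ := by
  set a : ℝ := ‖(Bp - Bp ^ 2) * (Bp - Bm)‖ with ha_def
  set b : ℝ := ‖(Bp - Bp ^ 2) - (Bm - Bm ^ 2)‖ with hb_def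
  have ha0 : 0 ≤ a := norm_nonneg _
  have hb0 : 0 ≤ b := norm_nonneg _
  have key : ‖Q - Q ^ 2‖ ≤ 2 * Real.sqrt a + b := by
    have hc2 : (0:ℝ) ≤ 2 * Real.sqrt a + b :=
      add_nonneg (mul_nonneg (by norm_num) (Real.sqrt_nonneg a)) hb0
    refine (ContinuousMap.norm_le _ hc2).mpr fun x => ?_
    set P := Bp x with hP
    set M := Bm x with hM
    set Kx := K x with hKx
    obtain ⟨hKsa, hK2, hcomm⟩ :
        IsSelfAdjoint Kx ∧ Kx * Kx = P - P ^ 2 ∧ P * Kx = Kx * P := by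
      rw [hKx, hK x]; exact stmt2.cfc_facts (hp0 x) (hp1 x)
    have hPh : Pᴴ = P := (hp0 x).1
    have hMh : Mᴴ = M := (hm0 x).1
    set E : Matrix (Fin N) (Fin N) ℂ := Kx * (P - M) with hE
    set G : Matrix (Fin N) (Fin N) ℂ := (M - M ^ 2) - (P - P ^ 2) with hG
    have hEH : Eᴴ = (P - M) * Kx := by
      rw [hE, Matrix.conjTranspose_mul, Matrix.conjTranspose_sub, hPh, hMh,
        ← Matrix.star_eq_conjTranspose, hKsa.star_eq]
    -- block decomposition of (Q - Q²) x
    have hsplit : (Q - Q ^ 2) x = Matrix.fromBlocks 0 E 0 0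
        + Matrix.fromBlocks 0 0 Eᴴ 0 + Matrix.fromBlocks 0 0 0 G := by
      have happ : (Q - Q ^ 2) x = Q x - Q x * Q x := by
        simp [pow_two]
      rw [happ, hQ x, ← hP, ← hM, ← hKx, Matrix.fromBlocks_multiply,
        stmt2.fromBlocks_sub]
      have b11 : (1 - P) - ((1 - P) * (1 - P) + Kx * Kx) = 0 := by
        rw [hK2]; noncomm_ring
      have b12 : Kx - ((1 - P) * Kx + Kx * M) = E := by
        rw [hE, mul_sub, ← hcomm]; noncomm_ring
      have b21 : Kx - (Kx * (1 - P) + M * Kx) = Eᴴ := by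
        rw [hEH, sub_mul, mul_one_sub, ← hcomm]; noncomm_ring
      have b22 : M - (Kx * Kx + M * M) = G := by
        rw [hK2, hG]; noncomm_ring
      rw [b11, b12, b21, b22, Matrix.fromBlocks_add, Matrix.fromBlocks_add]
      simp
    -- norm of E
    have hPM : ‖P - M‖ ≤ 1 := by
      refine stmt2.norm_le_one ((hp0 x).1.sub (hm0 x).1).isSelfAdjoint ?_ ?_
      · have : (1 : Matrix (Fin N) (Fin N) ℂ) - (P - M) = (1 - P) + M := by abel
        rw [this]; exact (hp1 x).add (hm0 x)
      · have : (1 : Matrix (Fin N) (Fin N) ℂ) + (P - M) = (1 - M) + P := by abel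
        rw [this]; exact (hm1 x).add (hp0 x)
    have hprod : ‖(P - P ^ 2) * (P - M)‖ ≤ a := by
      have : ((Bp - Bp ^ 2) * (Bp - Bm)) x = (P - P ^ 2) * (P - M) := by
        simp [pow_two, hP, hM]
      rw [ha_def, ← this]
      exact ContinuousMap.norm_coe_le_norm _ x
    have hEsq : ‖E‖ * ‖E‖ ≤ a := by
      have h4 : Eᴴ * E = (P - M) * ((P - P ^ 2) * (P - M)) := by
        rw [hEH, hE, mul_assoc, ← mul_assoc Kx Kx, hK2]
      calc ‖E‖ * ‖E‖ = ‖Eᴴ * E‖ := (Matrix.l2_opNorm_conjTranspose_mul_self E).symm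
        _ = ‖(P - M) * ((P - P ^ 2) * (P - M))‖ := by rw [h4]
        _ ≤ ‖P - M‖ * ‖(P - P ^ 2) * (P - M)‖ := norm_mul_le _ _
        _ ≤ 1 * a := by
            exact mul_le_mul hPM hprod (norm_nonneg _) zero_le_one
        _ = a := one_mul a
    have hEbound : ‖E‖ ≤ Real.sqrt a := by
      have := Real.sqrt_le_sqrt (by rw [← pow_two] at hEsq; exact hEsq :
        ‖E‖ ^ 2 ≤ a)
      rwa [Real.sqrt_sq (norm_nonneg E)] at this
    have hGbound : ‖G‖ ≤ b := by
      have hGF : G = -(((Bp - Bp ^ 2) - (Bm - Bm ^ 2)) x) := by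
        simp [hG, pow_two, hP, hM]
      rw [hGF, norm_neg, hb_def]
      exact ContinuousMap.norm_coe_le_norm _ x
    calc ‖(Q - Q ^ 2) x‖
        ≤ ‖Matrix.fromBlocks 0 E 0 0 + Matrix.fromBlocks 0 0 Eᴴ 0‖
          + ‖Matrix.fromBlocks (0 : Matrix (Fin N) (Fin N) ℂ) 0 0 G‖ := by
          rw [hsplit]; exact norm_add_le _ _
      _ ≤ ‖Matrix.fromBlocks (0 : Matrix (Fin N) (Fin N) ℂ) E 0 0‖
          + ‖Matrix.fromBlocks (0 : Matrix (Fin N) (Fin N) ℂ) 0 Eᴴ 0‖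
          + ‖Matrix.fromBlocks (0 : Matrix (Fin N) (Fin N) ℂ) 0 0 G‖ := by
          gcongr
          exact norm_add_le _ _
      _ ≤ ‖E‖ + ‖Eᴴ‖ + ‖G‖ := by
          gcongr
          · exact stmt2.norm_fromBlocks₁₂_le E
          · exact stmt2.norm_fromBlocks₂₁_le Eᴴ
          · exact stmt2.norm_fromBlocks₂₂_le G
      _ = ‖E‖ + ‖E‖ + ‖G‖ := by rw [Matrix.l2_opNorm_conjTranspose]
      _ ≤ Real.sqrt a + Real.sqrt a + b := by gcongr
      _ = 2 * Real.sqrt a + b := by ring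
  have hsq : Real.sqrt a < Real.sqrt δ := Real.sqrt_lt_sqrt ha0 h1
  have hbδ : b < δ := h3
  have hδsqrt : δ ≤ Real.sqrt δ := by
    have hs1 : Real.sqrt δ ≤ 1 := Real.sqrt_le_one.mpr hδ1.le
    have hss : Real.sqrt δ * Real.sqrt δ = δ := Real.mul_self_sqrt hδ0.le
    nlinarith [Real.sqrt_nonneg δ]
  linarith
end

section
/- With Q as above, the off-diagonal block satisfies (Q - Q²)₁₂ = κ(B₊)(B₊ - B₋), and consequently ‖(Q - Q²)₁₂‖² ≤ ‖B₊ - B₋‖ · ‖(B₊ - B₊²)(B₊ - B₋)‖. -/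
open scoped Matrix.Norms.L2Operator ComplexOrder

/-- The off-diagonal block of `Q - Q²` equals `κ(Bp)(Bp - Bm)`, and consequently
`‖(Q - Q²)₁₂‖² ≤ ‖Bp - Bm‖ · ‖(Bp - Bp²)(Bp - Bm)‖`. Here `κ(t) = √(t - t²)` is applied
via the continuous functional calculus, and `Q` is the block matrix
`(1 - Bp, κ(Bp); κ(Bp), Bm)`. The norm is the `L²` operator norm. -/
theorem stmt_4 {N : ℕ} (Bp Bm : Matrix (Fin N) (Fin N) ℂ)
    (hp : IsSelfAdjoint Bp) (hm : IsSelfAdjoint Bm)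
    (hp0 : Bp.PosSemidef) (hp1 : (1 - Bp).PosSemidef)
    (hm0 : Bm.PosSemidef) (hm1 : (1 - Bm).PosSemidef)
    (K : Matrix (Fin N) (Fin N) ℂ)
    (hK : K = cfc (fun t : ℝ => Real.sqrt (t - t ^ 2)) Bp)
    (Q : Matrix (Fin N ⊕ Fin N) (Fin N ⊕ Fin N) ℂ)
    (hQ : Q = Matrix.fromBlocks (1 - Bp) K K Bm) :
    (Q - Q ^ 2).toBlocks₁₂ = K * (Bp - Bm) ∧
    ‖(Q - Q ^ 2).toBlocks₁₂‖ ^ 2 ≤ ‖Bp - Bm‖ * ‖(Bp - Bp ^ 2) * (Bp - Bm)‖ := by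
  -- spectrum of Bp lies in [0,1]
  have hspec : ∀ x ∈ spectrum ℝ Bp, 0 ≤ x - x ^ 2 := by
    intro x hx
    have hx0 : 0 ≤ x := by
      have := Matrix.IsHermitian.spectrum_real_eq_range_eigenvalues hp0.1 ▸ hx
      obtain ⟨i, rfl⟩ := this
      exact hp0.eigenvalues_nonneg i
    have hx1 : x ≤ 1 := by
      have h1x : (1 - x) ∈ spectrum ℝ (1 - Bp) := by
        rw [spectrum.mem_iff] at hx ⊢
        have key : algebraMap ℝ (Matrix (Fin N) (Fin N) ℂ) (1 - x) - (1 - Bp)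
            = -(algebraMap ℝ (Matrix (Fin N) (Fin N) ℂ) x - Bp) := by
          rw [map_sub, map_one]; abel
        rw [key]
        exact fun h => hx (by simpa using h.neg)
      have := Matrix.IsHermitian.spectrum_real_eq_range_eigenvalues hp1.1 ▸ h1x
      obtain ⟨i, hi⟩ := this
      have := hp1.eigenvalues_nonneg i
      linarith [hi ▸ this]
    nlinarith
  have hcont : ContinuousOn (fun t : ℝ => Real.sqrt (t - t ^ 2)) (spectrum ℝ Bp) :=
    (Real.continuous_sqrt.comp (by continuity)).continuousOn
  have hid : Bp = cfc (fun t : ℝ => t) Bp := (cfc_id' ℝ Bp).symm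
  -- K commutes with Bp
  have h1 : Bp * K = cfc (fun t : ℝ => t * Real.sqrt (t - t ^ 2)) Bp := by
    rw [hK]
    nth_rewrite 1 [hid]
    exact (cfc_mul _ _ Bp (by fun_prop) hcont).symm
  have h2 : K * Bp = cfc (fun t : ℝ => Real.sqrt (t - t ^ 2) * t) Bp := by
    rw [hK]
    nth_rewrite 2 [hid]
    exact (cfc_mul _ _ Bp hcont (by fun_prop)).symm
  have hcomm : Bp * K = K * Bp := by
    rw [h1, h2]
    exact cfc_congr fun x _ => mul_comm _ _
  -- K * K = Bp - Bp ^ 2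
  have hK2 : K * K = Bp - Bp ^ 2 := by
    rw [hK, ← cfc_mul _ _ Bp hcont hcont]
    have e1 : cfc (fun t : ℝ => Real.sqrt (t - t ^ 2) * Real.sqrt (t - t ^ 2)) Bp
        = cfc (fun t : ℝ => t - t ^ 2) Bp :=
      cfc_congr fun x hx => Real.mul_self_sqrt (hspec x hx)
    rw [e1, cfc_sub (fun t : ℝ => t) (fun t : ℝ => t ^ 2) Bp (by fun_prop) (by fun_prop), cfc_id' ℝ Bp, cfc_pow_id Bp 2]
  have hKsa : IsSelfAdjoint K := hK ▸ cfc_predicate _ Bp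
  -- the off-diagonal block
  have hblock : (Q - Q ^ 2).toBlocks₁₂ = K * (Bp - Bm) := by
    have : (Q - Q ^ 2).toBlocks₁₂ = Q.toBlocks₁₂ - (Q ^ 2).toBlocks₁₂ := rfl
    rw [this, hQ, pow_two, Matrix.fromBlocks_multiply, Matrix.toBlocks_fromBlocks₁₂,
      Matrix.toBlocks_fromBlocks₁₂, sub_mul, one_mul, mul_sub, ← hcomm]
    abel
  refine ⟨hblock, ?_⟩
  rw [hblock]
  have hD : IsSelfAdjoint (Bp - Bm) := hp.sub hm
  have hnorm : ‖K * (Bp - Bm)‖ ^ 2 = ‖(Bp - Bm) * ((Bp - Bp ^ 2) * (Bp - Bm))‖ := by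
    rw [sq, ← CStarRing.norm_star_mul_self (x := K * (Bp - Bm))]
    congr 1
    rw [star_mul, hD.star_eq, hKsa.star_eq, mul_assoc, ← mul_assoc K K, hK2, ← mul_assoc,
      mul_assoc]
  rw [hnorm]
  exact norm_mul_le _ _
end

section
/- If Q is selfadjoint with ‖Q - Q²‖ < 1/4, and P, P' are projections with ‖Q - P‖ < 1/2 and ‖Q - P'‖ < 1/2, then ‖P - P'‖ < 1, and hence P and P' are unitarily equivalent. -/
open StarAlgebra in
lemma my_commute_cfc {A : Type*} [CStarAlgebra A] {x b : A} (hb : IsSelfAdjoint b)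
    (hx : Commute x b) (hx' : Commute (star x) b) (f : ℝ → ℝ) : Commute x (cfc f b) := by
  rw [cfc_real_eq_complex f hb]
  have hclosedset : ∀ s : Set A, IsClosed (Set.centralizer s) := by
    intro s
    have h : Set.centralizer s = ⋂ g ∈ s, {y | g * y = y * g} := by
      ext y; simp [Set.mem_centralizer_iff]
    rw [h]
    exact isClosed_biInter fun g _ =>
      isClosed_eq (continuous_const.mul continuous_id) (continuous_id.mul continuous_const)
  have hclosed : IsClosed ((StarSubalgebra.centralizer ℂ {x} : StarSubalgebra ℂ A) : Set A) := by
    rw [StarSubalgebra.coe_centralizer]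
    exact hclosedset _
  have hcent : b ∈ StarSubalgebra.centralizer ℂ {x} := by
    rw [StarSubalgebra.mem_centralizer_iff]
    rintro g rfl
    exact ⟨hx, hx'⟩
  have hmem : cfc (fun z : ℂ => (f z.re : ℂ)) b ∈ elemental ℂ b := by
    refine cfc_cases (· ∈ elemental ℂ b) b _ (zero_mem _) fun hg hn => ?_
    rw [cfcHom_eq_of_isStarNormal]
    exact SetLike.coe_mem _
  have := StarAlgebra.elemental.le_of_mem hclosed hcent hmem
  rw [StarSubalgebra.mem_centralizer_iff] at this
  exact (this x rfl).1


/-- If `Q` is selfadjoint with `‖Q - Q²‖ < 1/4` and `P`, `P'` are projections with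
`‖Q - P‖ < 1/2`, `‖Q - P'‖ < 1/2`, then `‖P - P'‖ < 1` and `P`, `P'` are unitarily
equivalent. -/
theorem stmt_8 {A : Type*} [CStarAlgebra A]
    (Q P P' : A) (hQ : IsSelfAdjoint Q) (hQ2 : ‖Q - Q ^ 2‖ < 1 / 4)
    (hP : IsSelfAdjoint P) (hP2 : P ^ 2 = P)
    (hP' : IsSelfAdjoint P') (hP'2 : P' ^ 2 = P')
    (h1 : ‖Q - P‖ < 1 / 2) (h2 : ‖Q - P'‖ < 1 / 2) :
    ‖P - P'‖ < 1 ∧ ∃ u ∈ unitary A, P' = u * P * star u := by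
  letI := CStarAlgebra.spectralOrder A
  letI := CStarAlgebra.spectralOrderedRing A
  set a : A := P - P' with ha_def
  have ha : IsSelfAdjoint a := hP.sub hP'
  have h3 : ‖P - P'‖ < 1 := by
    have : P - P' = (P - Q) + (Q - P') := by abel
    calc ‖P - P'‖ ≤ ‖P - Q‖ + ‖Q - P'‖ := by rw [this]; exact norm_add_le _ _
    _ = ‖Q - P‖ + ‖Q - P'‖ := by rw [norm_sub_rev]
    _ < 1 := by linarith
  refine ⟨h3, ?_⟩
  have hPP : P * P = P := by rw [← sq]; exact hP2
  have hP'P' : P' * P' = P' := by rw [← sq]; exact hP'2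
  have hPm : ∀ x : A, P * (P * x) = P * x := fun x => by rw [← mul_assoc, hPP]
  have hP'm : ∀ x : A, P' * (P' * x) = P' * x := fun x => by rw [← mul_assoc, hP'P']
  set v : A := P' * P + (1 - P') * (1 - P) with hv_def
  have hsv : star v = P * P' + (1 - P) * (1 - P') := by
    simp [hv_def, star_mul, star_sub, hP.star_eq, hP'.star_eq]
  have hvv : star v * v = 1 - a ^ 2 := by
    rw [hsv, hv_def, ha_def, sq]
    simp only [mul_sub, sub_mul, mul_add, add_mul, mul_one, one_mul, mul_assoc, hPP, hP'P',
      hPm, hP'm]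
    abel
  have hvv' : v * star v = 1 - a ^ 2 := by
    rw [hsv, hv_def, ha_def, sq]
    simp only [mul_sub, sub_mul, mul_add, add_mul, mul_one, one_mul, mul_assoc, hPP, hP'P',
      hPm, hP'm]
    abel
  have hvP : v * P = P' * v := by
    rw [hv_def]
    simp only [mul_sub, sub_mul, mul_add, add_mul, mul_one, one_mul, mul_assoc, hPP, hP'P',
      hPm, hP'm]
    abel
  have hP'a2 : Commute P' (a ^ 2) := by
    unfold Commute SemiconjBy
    rw [ha_def, sq]
    simp only [mul_sub, sub_mul, mul_add, add_mul, mul_one, one_mul, mul_assoc, hPP, hP'P',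
      hPm, hP'm]
    abel
  have hP'b : Commute P' (1 - a ^ 2) := (Commute.one_right P').sub_right hP'a2
  have hb_sa : IsSelfAdjoint (1 - a ^ 2) := (IsSelfAdjoint.one A).sub (ha.pow 2)
  have hb_pos : (0 : A) ≤ 1 - a ^ 2 := hvv ▸ star_mul_self_nonneg v
  have hb_unit : IsUnit (1 - a ^ 2) := by
    apply isUnit_one_sub_of_norm_lt_one
    calc ‖a ^ 2‖ = ‖a * a‖ := by rw [sq]
    _ ≤ ‖a‖ * ‖a‖ := norm_mul_le _ _
    _ < 1 := by nlinarith [norm_nonneg a, h3]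
  -- square root
  set s : A := cfc Real.sqrt (1 - a ^ 2) with hs_def
  have hs_sa : IsSelfAdjoint s := cfc_predicate _ _
  have hss : s * s = 1 - a ^ 2 := by
    rw [hs_def, ← cfc_mul _ _ _]
    have h : cfc (fun x : ℝ => Real.sqrt x * Real.sqrt x) (1 - a ^ 2)
        = cfc (id : ℝ → ℝ) (1 - a ^ 2) :=
      cfc_congr fun x hx => Real.mul_self_sqrt (spectrum_nonneg_of_nonneg hb_pos hx)
    rw [h, cfc_id ℝ _]
  have hsb : Commute s (1 - a ^ 2) := by
    rw [← hss]; exact (Commute.refl s).mul_right (Commute.refl s)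
  -- inverse of 1 - a^2
  set w : A := ↑hb_unit.unit⁻¹ with hw_def
  have hw1 : w * (1 - a ^ 2) = 1 := hb_unit.unit.inv_mul
  have hw2 : (1 - a ^ 2) * w = 1 := hb_unit.unit.mul_inv
  have hsw : Commute s w := by
    have : Commute s (hb_unit.unit : A) := by rwa [IsUnit.unit_spec]
    exact this.units_inv_right
  have hvb : Commute v (1 - a ^ 2) := by
    unfold Commute SemiconjBy
    calc v * (1 - a ^ 2) = v * (star v * v) := by rw [hvv]
    _ = (v * star v) * v := by rw [mul_assoc]
    _ = (1 - a ^ 2) * v := by rw [hvv']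
  have hvw : Commute v w := by
    have : Commute v (hb_unit.unit : A) := by rwa [IsUnit.unit_spec]
    exact this.units_inv_right
  have hsP' : Commute P' s := my_commute_cfc hb_sa hP'b (by rw [hP'.star_eq]; exact hP'b) Real.sqrt
  have hP'w : Commute P' w := by
    have : Commute P' (hb_unit.unit : A) := by rwa [IsUnit.unit_spec]
    exact this.units_inv_right
  set t : A := s * w with ht_def
  have hts : t * s = 1 := by
    rw [ht_def, mul_assoc, ← hsw.eq, ← mul_assoc, hss, hw2]
  have hst : s * t = 1 := by
    rw [ht_def, ← mul_assoc, hss, hw2]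
  have hstar_w : star w = w := by
    have h := congrArg star hw2
    rw [star_mul, star_one, hb_sa.star_eq] at h
    calc star w = star w * ((1 - a ^ 2) * w) := by rw [hw2, mul_one]
    _ = (star w * (1 - a ^ 2)) * w := by rw [mul_assoc]
    _ = w := by rw [h, one_mul]
  have hstar_t : star t = t := by
    rw [ht_def, star_mul, hstar_w, hs_sa.star_eq, hsw.eq]
  have htt : t * t = w := by
    rw [ht_def, hsw.symm.mul_mul_mul_comm, hss, ← mul_assoc, hw2, one_mul]
  have htP' : Commute P' t := hsP'.mul_right hP'w
  refine ⟨t * v, ?_, ?_⟩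
  · rw [Unitary.mem_iff]
    constructor
    · rw [star_mul, hstar_t]
      calc star v * t * (t * v) = star v * (t * t) * v := by simp only [ht_def, mul_assoc]
      _ = star v * (w * v) := by rw [htt, mul_assoc]
      _ = star v * (v * w) := by rw [hvw.eq]
      _ = (star v * v) * w := by rw [mul_assoc]
      _ = 1 := by rw [hvv, hw2]
    · rw [star_mul, hstar_t]
      calc t * v * (star v * t) = t * (v * star v) * t := by simp only [ht_def, mul_assoc]
      _ = t * (s * s) * t := by rw [hvv', hss]
      _ = (t * s) * (s * t) := by simp only [ht_def, mul_assoc]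
      _ = 1 := by rw [hts, hst, mul_one]
  · rw [star_mul, hstar_t]
    calc P' = P' * ((t * s) * (s * t)) := by rw [hts, hst, mul_one, mul_one]
    _ = (P' * t) * (s * s) * t := by simp only [ht_def, mul_assoc]
    _ = (t * P') * (v * star v) * t := by rw [← htP'.eq, hvv', hss]
    _ = t * (P' * v) * star v * t := by simp only [ht_def, mul_assoc]
    _ = t * (v * P) * star v * t := by rw [hvP]
    _ = t * v * P * (star v * t) := by simp only [ht_def, mul_assoc]
end

section
/- Let A₊, A₋ be selfadjoint N×N matrices with ‖A₊‖ ≤ m, ‖A₋‖ ≤ m (m ≥ 1) such that ‖(A± - A±²)(A₊ - A₋)‖ < mε for both signs, with mε ≤ 1. Then with g(t) = t - t², ‖g(A₊) - g(A₋)‖ < 2(m+3)√(mε). -/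
open scoped Matrix.Norms.L2Operator

open Matrix in
lemma diag_norm_le {n : Type*} [Fintype n] [DecidableEq n] (d : n → ℂ) {c : ℝ}
    (hc : 0 ≤ c) (h : ∀ i, ‖d i‖ ≤ c) : ‖Matrix.diagonal d‖ ≤ c := by
  rw [Matrix.l2_opNorm_def]
  refine ContinuousLinearMap.opNorm_le_bound _ hc fun x => ?_
  have hval : ∀ i, ((LinearEquiv.trans toEuclideanLin
      LinearMap.toContinuousLinearMap (Matrix.diagonal d)) x : EuclideanSpace ℂ n) i
      = d i * x i := by
    intro i
    simp [Matrix.toEuclideanLin_apply, Matrix.mulVec_diagonal]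
  rw [EuclideanSpace.norm_eq, EuclideanSpace.norm_eq]
  rw [← Real.sqrt_sq hc, ← Real.sqrt_mul (sq_nonneg c)]
  apply Real.sqrt_le_sqrt
  rw [Finset.mul_sum]
  apply Finset.sum_le_sum
  intro i _
  rw [hval i, norm_mul]
  calc (‖d i‖ * ‖x i‖)^2 = ‖d i‖^2 * ‖x i‖^2 := by ring
    _ ≤ c^2 * ‖x i‖^2 := by gcongr; exact h i

open Matrix in
lemma conj_norm_eq {n : Type*} [Fintype n] [DecidableEq n] (U A : Matrix n n ℂ)
    (hU : U ∈ Matrix.unitaryGroup n ℂ) : ‖U * A * star U‖ = ‖A‖ := by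
  rw [mul_assoc, CStarRing.norm_mem_unitary_mul _ hU,
    CStarRing.norm_mul_mem_unitary _ (Unitary.star_mem hU)]

lemma ring_id1 {n : ℕ} (Ap Am : Matrix (Fin n) (Fin n) ℂ) :
    (Ap - Ap ^ 2) - (Am - Am ^ 2) = (Ap - Am) - Ap * (Ap - Am) - (Ap - Am) * Am := by
  noncomm_ring

lemma ring_id2 {n : ℕ} (B C A1 A2 P : Matrix (Fin n) (Fin n) ℂ)
    (h : B = C - A1 * C - C * A2) :
    P * B * P = P * (C * P) - (P * A1) * (C * P) - (P * C) * (A2 * P) := by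
  subst h; noncomm_ring

lemma ring_id3 {n : ℕ} (B P : Matrix (Fin n) (Fin n) ℂ) :
    B = P * B * P + (1 - P) * B * P + B * (1 - P) := by
  noncomm_ring

/-- If `Ap`, `Am` are selfadjoint `N×N` matrices of norm at most `m` (with `m ≥ 1`) such that
`‖(A± - A±²)(Ap - Am)‖ < mε` for both signs and `mε ≤ 1`, then with `g(t) = t - t²` one has
`‖g(Ap) - g(Am)‖ < 2(m+3)√(mε)`. The norm is the `L²` operator norm. -/
theorem stmt_12 {N : ℕ} (Ap Am : Matrix (Fin N) (Fin N) ℂ)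
    (hp : IsSelfAdjoint Ap) (hm' : IsSelfAdjoint Am)
    (m ε : ℝ) (hm : 1 ≤ m) (hnp : ‖Ap‖ ≤ m) (hnm : ‖Am‖ ≤ m)
    (hme : m * ε ≤ 1)
    (h1 : ‖(Ap - Ap ^ 2) * (Ap - Am)‖ < m * ε)
    (h2 : ‖(Am - Am ^ 2) * (Ap - Am)‖ < m * ε) :
    ‖(Ap - Ap ^ 2) - (Am - Am ^ 2)‖ < 2 * (m + 3) * Real.sqrt (m * ε) := by
  have hmε : 0 < m * ε := lt_of_le_of_lt (norm_nonneg _) h1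
  set s := Real.sqrt (m * ε) with hs_def
  have hs : 0 < s := Real.sqrt_pos.mpr hmε
  have hs2 : s * s = m * ε := Real.mul_self_sqrt hmε.le
  have hC : (Ap - Am).IsHermitian := hp.sub hm'
  set U : Matrix (Fin N) (Fin N) ℂ := (hC.eigenvectorUnitary : Matrix (Fin N) (Fin N) ℂ)
    with hU_def
  have hU : U ∈ Matrix.unitaryGroup (Fin N) ℂ := hC.eigenvectorUnitary.2
  have hUU : star U * U = 1 := Matrix.mem_unitaryGroup_iff'.mp hU
  have hUU' : U * star U = 1 := Matrix.mem_unitaryGroup_iff.mp hU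
  set eig : Fin N → ℝ := hC.eigenvalues with heig_def
  set D : ((Fin N) → ℂ) → Matrix (Fin N) (Fin N) ℂ :=
    fun v => U * Matrix.diagonal v * star U with hD_def
  have hDmul : ∀ v w, D v * D w = D (v * w) := by
    intro v w
    simp only [hD_def]
    calc U * Matrix.diagonal v * star U * (U * Matrix.diagonal w * star U)
        = U * Matrix.diagonal v * (star U * U) * Matrix.diagonal w * star U := by
          simp only [mul_assoc]
      _ = U * (Matrix.diagonal v * Matrix.diagonal w) * star U := by
          rw [hUU]; simp only [mul_one, mul_assoc]
      _ = U * Matrix.diagonal (v * w) * star U := by rw [Matrix.diagonal_mul_diagonal]; rfl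
  have hDnorm : ∀ (v : Fin N → ℂ) (c : ℝ), 0 ≤ c → (∀ i, ‖v i‖ ≤ c) → ‖D v‖ ≤ c := by
    intro v c hc hv
    rw [hD_def]
    rw [conj_norm_eq _ _ hU]
    exact diag_norm_le v hc hv
  have hDstar : ∀ v, star (D v) = D (star v) := by
    intro v
    simp only [hD_def, Matrix.star_eq_conjTranspose, Matrix.conjTranspose_mul,
      Matrix.conjTranspose_conjTranspose, Matrix.diagonal_conjTranspose]
    rw [← Matrix.star_eq_conjTranspose U, mul_assoc]
  have hDsub : ∀ v w, D v - D w = D (v - w) := by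
    intro v w
    simp only [hD_def]
    have hd : Matrix.diagonal (v - w) = Matrix.diagonal v - Matrix.diagonal w :=
      (Matrix.diagonal_sub v w).symm
    rw [hd, Matrix.mul_sub, Matrix.sub_mul]
  have hDone : D (fun _ => 1) = 1 := by
    rw [hD_def]
    simp only [Matrix.diagonal_one]
    rw [mul_one, hUU']
  set eigv : Fin N → ℂ := RCLike.ofReal ∘ eig with heigv_def
  have hCeq : Ap - Am = D eigv := hC.spectral_theorem
  set ind : Fin N → ℂ := fun i => if |eig i| < s then 1 else 0 with hind_def
  set einv : Fin N → ℂ := fun i => if |eig i| < s then 0 else (eigv i)⁻¹ with heinv_def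
  have hP1 : ‖D ind‖ ≤ 1 := by
    refine hDnorm _ _ zero_le_one fun i => ?_
    rw [hind_def]
    by_cases h : |eig i| < s <;> simp [h]
  have hEnorm : ‖D einv‖ ≤ s⁻¹ := by
    refine hDnorm _ _ (by positivity) fun i => ?_
    rw [heinv_def, heigv_def]
    by_cases h : |eig i| < s
    · simp [h, (by positivity : (0:ℝ) ≤ s⁻¹)]
    · push_neg at h
      simp only [h.not_gt, if_false, norm_inv, Function.comp_apply]
      rw [RCLike.norm_ofReal]
      exact inv_anti₀ hs h
  have hCPnorm : ‖D (eigv * ind)‖ ≤ s := by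
    refine hDnorm _ _ hs.le fun i => ?_
    simp only [Pi.mul_apply, hind_def, heigv_def, Function.comp_apply]
    by_cases h : |eig i| < s
    · simp only [h, if_true, mul_one]
      rw [RCLike.norm_ofReal]
      exact h.le
    · simp [h, hs.le]
  have hPCnorm : ‖D (ind * eigv)‖ ≤ s := by
    rw [mul_comm ind eigv]; exact hCPnorm
  have hvec : (fun _ : Fin N => (1:ℂ)) - ind = eigv * einv := by
    funext i
    simp only [Pi.sub_apply, Pi.mul_apply, hind_def, heinv_def, heigv_def, Function.comp_apply]
    by_cases h : |eig i| < s
    · simp [h]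
    · push_neg at h
      have hne : eig i ≠ 0 := by
        intro h0
        rw [h0] at h
        simp only [abs_zero] at h
        linarith
      rw [if_neg h.not_gt, if_neg h.not_gt]
      rw [mul_inv_cancel₀ ((RCLike.ofReal_ne_zero (K := ℂ)).mpr hne)]
      norm_num
  have hindstar : star ind = ind := by
    funext i
    simp only [Pi.star_apply, hind_def]
    by_cases h : |eig i| < s <;> simp [h]
  clear_value einv ind eigv D eig U s
  have hQeq : (1 : Matrix (Fin N) (Fin N) ℂ) - D ind = (Ap - Am) * D einv := by
    rw [hCeq, hDmul, ← hDone, hDsub, hvec]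
  set B : Matrix (Fin N) (Fin N) ℂ := (Ap - Ap ^ 2) - (Am - Am ^ 2) with hB_def
  have hBsa : star B = B := ((hp.sub (hp.pow 2)).sub (hm'.sub (hm'.pow 2))).star_eq
  have hBid : B = (Ap - Am) - Ap * (Ap - Am) - (Ap - Am) * Am := ring_id1 Ap Am
  have hBC : ‖B * (Ap - Am)‖ < 2 * (m * ε) := by
    have hre : B * (Ap - Am) = (Ap - Ap ^ 2) * (Ap - Am) - (Am - Am ^ 2) * (Ap - Am) := by
      rw [hB_def, Matrix.sub_mul]
    rw [hre]
    calc ‖(Ap - Ap ^ 2) * (Ap - Am) - (Am - Am ^ 2) * (Ap - Am)‖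
        ≤ ‖(Ap - Ap ^ 2) * (Ap - Am)‖ + ‖(Am - Am ^ 2) * (Ap - Am)‖ := norm_sub_le _ _
      _ < m * ε + m * ε := add_lt_add h1 h2
      _ = 2 * (m * ε) := by ring
  clear_value B
  have hBQ : ‖B * (1 - D ind)‖ < 2 * s := by
    rw [hQeq, ← mul_assoc]
    calc ‖B * (Ap - Am) * D einv‖ ≤ ‖B * (Ap - Am)‖ * ‖D einv‖ := Matrix.l2_opNorm_mul _ _
      _ ≤ ‖B * (Ap - Am)‖ * s⁻¹ := mul_le_mul_of_nonneg_left hEnorm (norm_nonneg _)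
      _ < (2 * (m * ε)) * s⁻¹ := mul_lt_mul_of_pos_right hBC (by positivity)
      _ = 2 * s := by rw [← hs2]; field_simp
  have hQB : ‖(1 - D ind) * B‖ = ‖B * (1 - D ind)‖ := by
    have hQstar : star ((1 : Matrix (Fin N) (Fin N) ℂ) - D ind) = 1 - D ind := by
      rw [star_sub, star_one, hDstar, hindstar]
    have hre : (1 - D ind) * B = star (B * (1 - D ind)) := by
      rw [star_mul, hQstar, hBsa]
    rw [hre, Matrix.star_eq_conjTranspose, Matrix.l2_opNorm_conjTranspose]
  have hQBP : ‖(1 - D ind) * B * D ind‖ < 2 * s := by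
    calc ‖(1 - D ind) * B * D ind‖
        ≤ ‖(1 - D ind) * B‖ * ‖D ind‖ := Matrix.l2_opNorm_mul _ _
      _ ≤ ‖(1 - D ind) * B‖ * 1 := mul_le_mul_of_nonneg_left hP1 (norm_nonneg _)
      _ = ‖B * (1 - D ind)‖ := by rw [mul_one, hQB]
      _ < 2 * s := hBQ
  have hCP : (Ap - Am) * D ind = D (eigv * ind) := by rw [hCeq, hDmul]
  have hPC : D ind * (Ap - Am) = D (ind * eigv) := by rw [hCeq, hDmul]
  have hPBP : ‖D ind * B * D ind‖ ≤ (1 + 2 * m) * s := by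
    rw [ring_id2 B (Ap - Am) Ap Am (D ind) hBid]
    have e1 : ‖D ind * ((Ap - Am) * D ind)‖ ≤ s := by
      rw [hCP]
      calc ‖D ind * D (eigv * ind)‖ ≤ ‖D ind‖ * ‖D (eigv * ind)‖ := Matrix.l2_opNorm_mul _ _
        _ ≤ 1 * s := mul_le_mul hP1 hCPnorm (norm_nonneg _) zero_le_one
        _ = s := one_mul s
    have e2 : ‖(D ind * Ap) * ((Ap - Am) * D ind)‖ ≤ m * s := by
      rw [hCP]
      calc ‖(D ind * Ap) * D (eigv * ind)‖
          ≤ ‖D ind * Ap‖ * ‖D (eigv * ind)‖ := Matrix.l2_opNorm_mul _ _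
        _ ≤ ‖D ind‖ * ‖Ap‖ * ‖D (eigv * ind)‖ :=
            mul_le_mul_of_nonneg_right (Matrix.l2_opNorm_mul _ _) (norm_nonneg _)
        _ ≤ 1 * m * s :=
            mul_le_mul (mul_le_mul hP1 hnp (norm_nonneg _) zero_le_one) hCPnorm
              (norm_nonneg _) (mul_nonneg zero_le_one (zero_le_one.trans hm))
        _ = m * s := by ring
    have e3 : ‖(D ind * (Ap - Am)) * (Am * D ind)‖ ≤ m * s := by
      rw [hPC]
      calc ‖D (ind * eigv) * (Am * D ind)‖
          ≤ ‖D (ind * eigv)‖ * ‖Am * D ind‖ := Matrix.l2_opNorm_mul _ _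
        _ ≤ ‖D (ind * eigv)‖ * (‖Am‖ * ‖D ind‖) :=
            mul_le_mul_of_nonneg_left (Matrix.l2_opNorm_mul _ _) (norm_nonneg _)
        _ ≤ s * (m * 1) :=
            mul_le_mul hPCnorm (mul_le_mul hnm hP1 (norm_nonneg _) (zero_le_one.trans hm))
              (mul_nonneg (norm_nonneg _) (norm_nonneg _)) hs.le
        _ = m * s := by ring
    calc ‖D ind * ((Ap - Am) * D ind) - (D ind * Ap) * ((Ap - Am) * D ind)
          - (D ind * (Ap - Am)) * (Am * D ind)‖
        ≤ ‖D ind * ((Ap - Am) * D ind) - (D ind * Ap) * ((Ap - Am) * D ind)‖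
          + ‖(D ind * (Ap - Am)) * (Am * D ind)‖ := norm_sub_le _ _
      _ ≤ ‖D ind * ((Ap - Am) * D ind)‖ + ‖(D ind * Ap) * ((Ap - Am) * D ind)‖
          + ‖(D ind * (Ap - Am)) * (Am * D ind)‖ :=
            add_le_add_left (norm_sub_le _ _) _
      _ ≤ s + m * s + m * s := add_le_add (add_le_add e1 e2) e3
      _ = (1 + 2 * m) * s := by ring
  calc ‖B‖
      ≤ ‖D ind * B * D ind‖ + ‖(1 - D ind) * B * D ind‖ + ‖B * (1 - D ind)‖ := by
        nth_rewrite 1 [ring_id3 B (D ind)]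
        exact norm_add₃_le
    _ < (1 + 2 * m) * s + 2 * s + 2 * s :=
        add_lt_add (add_lt_add_of_le_of_lt hPBP hQBP) hBQ
    _ ≤ 2 * (m + 3) * s := by nlinarith
end

section
/- Let (φ_α)_{α∈Λ} be a partition of unity as above and g_{αβ} : X → U(N) continuous maps with g_{αβ} = g_{βα}⁻¹ satisfying the ε-almost-cocycle condition ‖g_{αβ}(x)g_{βγ}(x) - g_{αγ}(x)‖ < ε wherever defined. Then the block matrix A with A_{αβ} = φ_α φ_β g_{αβ} satisfies ‖A - A²‖ < mε, where m = |Λ|. -/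
open scoped Matrix.Norms.L2Operator

open Matrix in
lemma block_l2_opNorm_le {ι n : Type*} [Fintype ι] [Fintype n] [DecidableEq ι] [DecidableEq n]
    (M : Matrix (ι × n) (ι × n) ℂ) (κ : ℝ) (hκ : 0 ≤ κ)
    (h : ∀ α γ, ‖(Matrix.of fun i j => M (α, i) (γ, j) : Matrix n n ℂ)‖ ≤ κ) :
    ‖M‖ ≤ (Fintype.card ι : ℝ) * κ := by
  rw [Matrix.l2_opNorm_def]
  refine ContinuousLinearMap.opNorm_le_bound _ (by positivity) fun x => ?_
  set m : ℝ := (Fintype.card ι : ℝ) with hm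
  have hm0 : (0:ℝ) ≤ m := by positivity
  set xc : ι → EuclideanSpace ℂ n := fun γ => WithLp.toLp 2 (fun j => x (γ, j)) with hxc
  have hx2 : ∑ γ, ‖xc γ‖ ^ 2 = ‖x‖ ^ 2 := by
    rw [EuclideanSpace.norm_eq x, Real.sq_sqrt (by positivity), Fintype.sum_prod_type]
    refine Finset.sum_congr rfl fun γ _ => ?_
    rw [EuclideanSpace.norm_eq, Real.sq_sqrt (by positivity)]
  set B : ι → ι → Matrix n n ℂ := fun α γ => Matrix.of fun i j => M (α, i) (γ, j) with hB
  set y : EuclideanSpace ℂ (ι × n) :=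
    (Matrix.toEuclideanLin.trans LinearMap.toContinuousLinearMap) M x with hy
  show ‖y‖ ≤ m * κ * ‖x‖
  set yc : ι → EuclideanSpace ℂ n := fun α => WithLp.toLp 2 (fun i => y (α, i)) with hyc
  have hy2 : ‖y‖ ^ 2 = ∑ α, ‖yc α‖ ^ 2 := by
    rw [EuclideanSpace.norm_eq y, Real.sq_sqrt (by positivity), Fintype.sum_prod_type]
    refine Finset.sum_congr rfl fun γ _ => ?_
    rw [EuclideanSpace.norm_eq, Real.sq_sqrt (by positivity)]
  have hycc : ∀ α, yc α = ∑ γ, (EuclideanSpace.equiv n ℂ).symm ((B α γ) *ᵥ (xc γ)) := by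
    intro α
    rw [← map_sum]
    ext i
    show (M *ᵥ (WithLp.equiv 2 _) x) (α, i) = (∑ γ, (B α γ) *ᵥ (xc γ)) i
    rw [Finset.sum_apply, Matrix.mulVec, dotProduct, Fintype.sum_prod_type]
    refine Finset.sum_congr rfl fun γ _ => ?_
    rw [Matrix.mulVec, dotProduct]
    rfl
  have hs2 : (∑ γ, ‖xc γ‖) ^ 2 ≤ m * ‖x‖ ^ 2 := by
    have := Finset.sum_mul_sq_le_sq_mul_sq Finset.univ (fun _ : ι => (1:ℝ)) (fun γ => ‖xc γ‖)
    simpa [hx2, hm] using this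
  have hyb : ∀ α, ‖yc α‖ ≤ κ * ∑ γ, ‖xc γ‖ := by
    intro α
    rw [hycc α]
    refine (norm_sum_le _ _).trans ?_
    rw [Finset.mul_sum]
    refine Finset.sum_le_sum fun γ _ => ?_
    exact ((Matrix.l2_opNorm_mulVec (B α γ) (xc γ)).trans
      (mul_le_mul_of_nonneg_right (h α γ) (norm_nonneg _)))
  have hyn : ‖y‖ ^ 2 ≤ (m * κ * ‖x‖) ^ 2 := by
    rw [hy2]
    calc ∑ α, ‖yc α‖ ^ 2 ≤ ∑ _α : ι, (κ * ∑ γ, ‖xc γ‖) ^ 2 := by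
          refine Finset.sum_le_sum fun α _ => ?_
          exact pow_le_pow_left₀ (norm_nonneg _) (hyb α) 2
      _ = m * (κ ^2 * (∑ γ, ‖xc γ‖) ^ 2) := by
          rw [Finset.sum_const, Finset.card_univ, nsmul_eq_mul, mul_pow]
      _ ≤ m * (κ ^2 * (m * ‖x‖ ^ 2)) := by
          refine mul_le_mul_of_nonneg_left (mul_le_mul_of_nonneg_left hs2 (by positivity)) hm0
      _ = (m * κ * ‖x‖) ^ 2 := by ring
  have := Real.sqrt_le_sqrt hyn
  rwa [Real.sqrt_sq (norm_nonneg _), Real.sqrt_sq (by positivity)] at this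

/-- Let `(φ_α²)` be a partition of unity (`0 ≤ φ_α ≤ 1`, `Σ_β φ_β² = 1`) and
`g_{αβ} : X → U(N)` unitary-valued maps with `g_{αβ} = g_{βα}⁻¹` satisfying the
`ε`-almost-cocycle condition `‖g_{αβ}(x) g_{βγ}(x) - g_{αγ}(x)‖ < ε` wherever defined.
Then the block matrix `A` with `A_{αβ} = φ_α φ_β g_{αβ}` satisfies `‖A - A²‖ < mε`,
where `m = |Λ|`, pointwise (hence in supremum norm).  Norms are `L²` operator norms. -/
theorem stmt_17 {N : ℕ} {X : Type*} [TopologicalSpace X] [CompactSpace X]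
    {Λ : Type*} [Fintype Λ] [DecidableEq Λ]
    (φ : Λ → C(X, ℝ)) (hφ0 : ∀ α x, 0 ≤ φ α x) (hφ1 : ∀ α x, φ α x ≤ 1)
    (hsum : ∀ x, ∑ β, (φ β x) ^ 2 = 1)
    (ε : ℝ)
    (g : Λ → Λ → X → Matrix (Fin N) (Fin N) ℂ)
    (hgu : ∀ α β x, φ α x ≠ 0 → φ β x ≠ 0 → g α β x ∈ Matrix.unitaryGroup (Fin N) ℂ)
    (hgsym : ∀ α β x, φ α x ≠ 0 → φ β x ≠ 0 → g α β x = star (g β α x))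
    (hgac : ∀ α β γ x, φ α x ≠ 0 → φ β x ≠ 0 → φ γ x ≠ 0 →
      ‖g α β x * g β γ x - g α γ x‖ < ε)
    (A : X → Matrix (Λ × Fin N) (Λ × Fin N) ℂ)
    (hA : ∀ x, A x = Matrix.of fun p q : Λ × Fin N =>
      ((φ p.1 x * φ q.1 x : ℝ) : ℂ) * g p.1 q.1 x p.2 q.2) :
    ∀ x, ‖A x - A x * A x‖ < (Fintype.card Λ : ℝ) * ε := by
  intro x
  -- some index with nonzero φ
  obtain ⟨β₀, hβ₀⟩ : ∃ β, φ β x ≠ 0 := by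
    obtain ⟨β, -, hβ⟩ := Finset.exists_ne_zero_of_sum_ne_zero
      (by rw [hsum x]; exact one_ne_zero)
    exact ⟨β, fun h => hβ (by rw [h]; ring)⟩
  have hε : 0 < ε := lt_of_le_of_lt (norm_nonneg _) (hgac β₀ β₀ β₀ x hβ₀ hβ₀ hβ₀)
  classical
  set T : Finset (Λ × Λ × Λ) :=
    Finset.univ.filter (fun t => φ t.1 x ≠ 0 ∧ φ t.2.1 x ≠ 0 ∧ φ t.2.2 x ≠ 0) with hT
  have hTne : T.Nonempty := ⟨(β₀, β₀, β₀), by simp [hT, hβ₀]⟩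
  set ε' : ℝ := T.sup' hTne
    (fun t => ‖g t.1 t.2.1 x * g t.2.1 t.2.2 x - g t.1 t.2.2 x‖) with hε'
  have hε'lt : ε' < ε := by
    rw [hε', Finset.sup'_lt_iff]
    rintro ⟨α, β, γ⟩ ht
    simp only [hT, Finset.mem_filter] at ht
    exact hgac α β γ x ht.2.1 ht.2.2.1 ht.2.2.2
  have hε'0 : 0 ≤ ε' := le_trans (norm_nonneg _)
    (Finset.le_sup' (f := fun t : Λ × Λ × Λ =>
      ‖g t.1 t.2.1 x * g t.2.1 t.2.2 x - g t.1 t.2.2 x‖)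
      (show (β₀, β₀, β₀) ∈ T by simp [hT, hβ₀]))
  have hsumC : (∑ β, (((φ β x) ^ 2 : ℝ) : ℂ)) = 1 := by
    rw [← Complex.ofReal_sum, hsum x, Complex.ofReal_one]
  -- block identity
  have hblock : ∀ α γ, (Matrix.of (fun i j => (A x - A x * A x) (α, i) (γ, j))
        : Matrix (Fin N) (Fin N) ℂ)
      = ((φ α x * φ γ x : ℝ) : ℂ) •
        ∑ β, (((φ β x) ^ 2 : ℝ) : ℂ) • (g α γ x - g α β x * g β γ x) := by
    intro α γ
    have key : ∑ β, (((φ β x) ^ 2 : ℝ) : ℂ) • (g α γ x - g α β x * g β γ x)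
        = g α γ x - ∑ β, (((φ β x) ^ 2 : ℝ) : ℂ) • (g α β x * g β γ x) := by
      simp only [smul_sub, Finset.sum_sub_distrib, ← Finset.sum_smul, hsumC, one_smul]
    rw [key]
    ext i j
    simp only [Matrix.of_apply, Matrix.sub_apply, Matrix.mul_apply, hA, Matrix.smul_apply,
      Matrix.sum_apply, smul_eq_mul, Fintype.sum_prod_type]
    push_cast
    rw [mul_sub, sub_right_inj]
    simp only [Finset.mul_sum]
    refine Finset.sum_congr rfl fun β _ => ?_
    refine Finset.sum_congr rfl fun k _ => ?_
    ring
  -- block norm bound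
  have hbound : ∀ α γ, ‖(Matrix.of (fun i j => (A x - A x * A x) (α, i) (γ, j))
      : Matrix (Fin N) (Fin N) ℂ)‖ ≤ ε' := by
    intro α γ
    rw [hblock α γ]
    by_cases hα : φ α x = 0
    · rw [show ((φ α x * φ γ x : ℝ) : ℂ) = 0 by rw [hα]; push_cast; ring, zero_smul, norm_zero]
      exact hε'0
    by_cases hγ : φ γ x = 0
    · rw [show ((φ α x * φ γ x : ℝ) : ℂ) = 0 by rw [hγ]; push_cast; ring, zero_smul, norm_zero]
      exact hε'0
    rw [norm_smul]
    have h1 : ‖((φ α x * φ γ x : ℝ) : ℂ)‖ ≤ 1 := by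
      rw [Complex.norm_real, Real.norm_eq_abs,
        abs_of_nonneg (mul_nonneg (hφ0 α x) (hφ0 γ x))]
      exact mul_le_one₀ (hφ1 α x) (hφ0 γ x) (hφ1 γ x)
    have h2 : ‖∑ β, (((φ β x) ^ 2 : ℝ) : ℂ) • (g α γ x - g α β x * g β γ x)‖ ≤ ε' := by
      refine (norm_sum_le _ _).trans ?_
      have : ∀ β ∈ Finset.univ,
          ‖(((φ β x) ^ 2 : ℝ) : ℂ) • (g α γ x - g α β x * g β γ x)‖ ≤ (φ β x) ^ 2 * ε' := by
        intro β _
        rw [norm_smul, Complex.norm_real, Real.norm_eq_abs, abs_of_nonneg (sq_nonneg _)]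
        by_cases hβ : φ β x = 0
        · simp [hβ]
        refine mul_le_mul_of_nonneg_left ?_ (sq_nonneg _)
        rw [norm_sub_rev]
        exact Finset.le_sup' (f := fun t : Λ × Λ × Λ =>
          ‖g t.1 t.2.1 x * g t.2.1 t.2.2 x - g t.1 t.2.2 x‖)
          (show (α, β, γ) ∈ T by simp [hT, hα, hβ, hγ])
      refine (Finset.sum_le_sum this).trans ?_
      rw [← Finset.sum_mul, hsum x, one_mul]
    calc ‖((φ α x * φ γ x : ℝ) : ℂ)‖ * ‖∑ β, (((φ β x) ^ 2 : ℝ) : ℂ) •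
          (g α γ x - g α β x * g β γ x)‖
        ≤ 1 * ε' := mul_le_mul h1 h2 (norm_nonneg _) one_pos.le
      _ = ε' := one_mul _
  have hcard : (0:ℝ) < (Fintype.card Λ : ℝ) := by
    have : Nonempty Λ := ⟨β₀⟩
    exact_mod_cast Fintype.card_pos
  calc ‖A x - A x * A x‖ ≤ (Fintype.card Λ : ℝ) * ε' :=
        block_l2_opNorm_le _ _ hε'0 hbound
    _ < (Fintype.card Λ : ℝ) * ε := by
        exact mul_lt_mul_of_pos_left hε'lt hcard
end

section
/- Let g⁺_{αβ}, g⁻_{αβ} : X → U(N) be an ε-generalized pair of cocycles (i.e., ‖(g±_{αβ}g±_{βγ} - g±_{αγ})(g⁺_{γδ} - g⁻_{γδ})‖ < ε pointwise for both signs, and g±_{αβ} = (g±_{βα})⁻¹), and let (φ_α²) be a partition of unity as above. Define A± by (A±)_{αβ} = φ_α φ_β g±_{αβ}. Then A₊ and A₋ are selfadjoint and ‖(A± - A±²)(A₊ - A₋)‖ < mε for both signs, where m = |Λ|. -/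
open scoped Matrix.Norms.L2Operator

namespace Stmt18Aux
open Matrix

section Iota
variable {n Λ : Type*} [Fintype n] [DecidableEq n] [Fintype Λ] [DecidableEq Λ]

def iota (n Λ : Type*) [DecidableEq n] [DecidableEq Λ] (α : Λ) : Matrix (Λ × n) n ℂ :=
  Matrix.of fun p i => if p = (α, i) then 1 else 0

lemma iota_norm_le (α : Λ) : ‖iota n Λ α‖ ≤ 1 := by
  have h1 : (iota n Λ α)ᴴ * iota n Λ α = 1 := by
    ext i j
    simp only [iota, Matrix.mul_apply, Matrix.conjTranspose_apply, Matrix.of_apply,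
      apply_ite (star : ℂ → ℂ), star_one, star_zero, ite_mul, zero_mul, one_mul]
    rw [Finset.sum_ite_eq' Finset.univ ((α, i) : Λ × n)]
    simp [Matrix.one_apply, Prod.ext_iff]
  have h2 : ‖iota n Λ α‖ * ‖iota n Λ α‖ ≤ 1 := by
    rw [← Matrix.l2_opNorm_conjTranspose_mul_self, h1, Matrix.cstar_norm_def,
      _root_.map_one]
    exact ContinuousLinearMap.norm_id_le
  nlinarith [norm_nonneg (iota n Λ α)]

lemma block_eq (B : Λ → Λ → Matrix n n ℂ) :
    (Matrix.of fun p q : Λ × n => B p.1 q.1 p.2 q.2) =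
      ∑ α, ∑ δ, iota n Λ α * B α δ * (iota n Λ δ)ᴴ := by
  ext p q
  simp only [Matrix.sum_apply, Matrix.mul_apply, iota, Matrix.conjTranspose_apply,
    Matrix.of_apply, apply_ite (star : ℂ → ℂ), star_one, star_zero, ite_mul, zero_mul, one_mul,
    mul_ite, mul_zero, mul_one]
  simp [Prod.ext_iff, ite_and, Finset.sum_ite_eq]

lemma norm_block_le (B : Λ → Λ → Matrix n n ℂ) :
    ‖(Matrix.of fun p q : Λ × n => B p.1 q.1 p.2 q.2)‖ ≤ ∑ α, ∑ δ, ‖B α δ‖ := by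
  rw [block_eq]
  refine (norm_sum_le _ _).trans (Finset.sum_le_sum fun α _ => ?_)
  refine (norm_sum_le _ _).trans (Finset.sum_le_sum fun δ _ => ?_)
  calc ‖iota n Λ α * B α δ * (iota n Λ δ)ᴴ‖ ≤ ‖iota n Λ α‖ * ‖B α δ‖ * ‖(iota n Λ δ)ᴴ‖ := by
        refine (Matrix.l2_opNorm_mul _ _).trans ?_
        exact mul_le_mul_of_nonneg_right (Matrix.l2_opNorm_mul _ _) (norm_nonneg _)
    _ ≤ ‖B α δ‖ := by
        rw [Matrix.l2_opNorm_conjTranspose]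
        have := iota_norm_le (n := n) (Λ := Λ) α
        have := iota_norm_le (n := n) (Λ := Λ) δ
        have h : ‖iota n Λ α‖ * ‖B α δ‖ * ‖iota n Λ δ‖ ≤ 1 * ‖B α δ‖ * 1 := by
          gcongr
        simpa using h

end Iota

variable {N : ℕ} {Λ : Type*} [Fintype Λ] [DecidableEq Λ]

lemma step1 (f : Λ → ℝ) (hsum : ∑ β, (f β)^2 = 1)
    (g : Λ → Λ → Matrix (Fin N) (Fin N) ℂ)
    (A : Matrix (Λ × Fin N) (Λ × Fin N) ℂ)
    (hA : A = Matrix.of fun p q => ((f p.1 * f q.1 : ℝ) : ℂ) * g p.1 q.1 p.2 q.2) :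
    A - A^2 = ∑ β, Matrix.of (fun p q : Λ × Fin N =>
      ((f p.1 * f q.1 * f β ^ 2 : ℝ) : ℂ) *
        (g p.1 q.1 - g p.1 β * g β q.1) p.2 q.2) := by
  have hs : ∑ x : Λ, ((f x : ℂ) * (f x)) = 1 := by
    have : ((∑ β, (f β)^2 : ℝ) : ℂ) = 1 := by rw [hsum]; norm_num
    rw [← this]; push_cast; exact Finset.sum_congr rfl fun x _ => (pow_two _).symm
  ext p q
  simp only [Matrix.sub_apply, Matrix.sum_apply, Matrix.of_apply, pow_two, Matrix.mul_apply,
    hA, Fintype.sum_prod_type]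
  have key : ∀ x : Λ, (((f p.1 * f q.1 * (f x * f x) : ℝ)):ℂ) *
      (g p.1 q.1 p.2 q.2 - ∑ j, g p.1 x p.2 j * g x q.1 j q.2) =
      ((f x:ℂ)*(f x)) * (((f p.1 * f q.1 : ℝ):ℂ) * g p.1 q.1 p.2 q.2) -
        ∑ j, ((f p.1 * f x : ℝ):ℂ) * g p.1 x p.2 j * (((f x * f q.1 : ℝ):ℂ) * g x q.1 j q.2) := by
    intro x
    push_cast
    rw [mul_sub, Finset.mul_sum]
    congr 1
    · ring
    · exact Finset.sum_congr rfl fun j _ => by ring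
  rw [Finset.sum_congr rfl fun x _ => key x, Finset.sum_sub_distrib, ← Finset.sum_mul, hs,
    one_mul]

lemma step2 (f : Λ → ℝ) (g h : Λ → Λ → Matrix (Fin N) (Fin N) ℂ) (β : Λ)
    (D : Matrix (Λ × Fin N) (Λ × Fin N) ℂ)
    (hD : D = Matrix.of fun p q => ((f p.1 * f q.1 : ℝ) : ℂ) * h p.1 q.1 p.2 q.2) :
    (Matrix.of (fun p q : Λ × Fin N =>
      ((f p.1 * f q.1 * f β ^ 2 : ℝ) : ℂ) *
        (g p.1 q.1 - g p.1 β * g β q.1) p.2 q.2)) * D =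
    Matrix.of (fun p q : Λ × Fin N =>
      (∑ γ, ((f p.1 * f q.1 * f β ^ 2 * f γ ^ 2 : ℝ) : ℂ) •
        ((g p.1 γ - g p.1 β * g β γ) * h γ q.1)) p.2 q.2) := by
  ext p q
  simp only [Matrix.mul_apply, Matrix.of_apply, hD, Fintype.sum_prod_type, Matrix.sum_apply,
    Matrix.smul_apply, smul_eq_mul, Finset.mul_sum]
  refine Finset.sum_congr rfl fun γ _ => Finset.sum_congr rfl fun j _ => ?_
  push_cast
  ring
-- aux lemma, appended to t4 for testing
lemma aux (f : Λ → ℝ) (hf0 : ∀ α, 0 ≤ f α) (hsum : ∑ β, (f β)^2 = 1)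
    (c : ℝ) (hc0 : 0 ≤ c)
    (g h : Λ → Λ → Matrix (Fin N) (Fin N) ℂ)
    (hb : ∀ α β γ δ, f α ≠ 0 → f β ≠ 0 → f γ ≠ 0 → f δ ≠ 0 →
      ‖(g α β * g β γ - g α γ) * h γ δ‖ ≤ c)
    (A D : Matrix (Λ × Fin N) (Λ × Fin N) ℂ)
    (hA : A = Matrix.of fun p q => ((f p.1 * f q.1 : ℝ) : ℂ) * g p.1 q.1 p.2 q.2)
    (hD : D = Matrix.of fun p q => ((f p.1 * f q.1 : ℝ) : ℂ) * h p.1 q.1 p.2 q.2) :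
    ‖(A - A^2) * D‖ ≤ (Fintype.card Λ : ℝ) * c := by
  classical
  set B : Λ → Λ → Λ → Matrix (Fin N) (Fin N) ℂ := fun β α δ =>
    ∑ γ, ((f α * f δ * f β ^ 2 * f γ ^ 2 : ℝ) : ℂ) • ((g α γ - g α β * g β γ) * h γ δ) with hB
  have hsplit : (A - A^2) * D = ∑ β, Matrix.of (fun p q : Λ × Fin N =>
      (B β p.1 q.1) p.2 q.2) := by
    rw [step1 f hsum g A hA, Finset.sum_mul]
    exact Finset.sum_congr rfl fun β _ => step2 f g h β D hD
  have hBnorm : ∀ β α δ, ‖B β α δ‖ ≤ f α * f δ * f β ^ 2 * c := by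
    intro β α δ
    rw [hB]
    refine (norm_sum_le _ _).trans ?_
    have hterm : ∀ γ : Λ, ‖((f α * f δ * f β ^ 2 * f γ ^ 2 : ℝ) : ℂ) •
        ((g α γ - g α β * g β γ) * h γ δ)‖ ≤ (f α * f δ * f β ^ 2 * f γ ^ 2) * c := by
      intro γ
      rw [norm_smul, Complex.norm_real, Real.norm_eq_abs]
      by_cases h1 : f α = 0; · simp [h1]
      by_cases h2 : f β = 0; · simp [h2]
      by_cases h3 : f γ = 0; · simp [h3]
      by_cases h4 : f δ = 0; · simp [h4]
      have hT : ‖(g α γ - g α β * g β γ) * h γ δ‖ ≤ c := by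
        rw [show (g α γ - g α β * g β γ) * h γ δ =
          -((g α β * g β γ - g α γ) * h γ δ) by noncomm_ring, norm_neg]
        exact hb α β γ δ h1 h2 h3 h4
      have hnn : 0 ≤ f α * f δ * f β ^ 2 * f γ ^ 2 :=
        mul_nonneg (mul_nonneg (mul_nonneg (hf0 α) (hf0 δ)) (sq_nonneg _)) (sq_nonneg _)
      rw [abs_of_nonneg hnn]
      exact mul_le_mul_of_nonneg_left hT hnn
    refine (Finset.sum_le_sum fun γ _ => hterm γ).trans (le_of_eq ?_)
    calc ∑ γ, (f α * f δ * f β ^ 2 * f γ ^ 2) * c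
        = (f α * f δ * f β ^ 2 * c) * ∑ γ, f γ ^ 2 := by
          rw [Finset.mul_sum]; exact Finset.sum_congr rfl fun γ _ => by ring
      _ = f α * f δ * f β ^ 2 * c := by rw [hsum, mul_one]
  have hS2 : (∑ α, f α) ^ 2 ≤ (Fintype.card Λ : ℝ) := by
    have := Finset.sum_mul_sq_le_sq_mul_sq Finset.univ f (fun _ => 1)
    simpa [hsum] using this
  have hS0 : 0 ≤ ∑ α, f α := Finset.sum_nonneg fun α _ => hf0 α
  rw [hsplit]
  refine (norm_sum_le _ _).trans ?_
  have hblock : ∀ β : Λ, ‖(Matrix.of (fun p q : Λ × Fin N => (B β p.1 q.1) p.2 q.2))‖ ≤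
      ∑ α, ∑ δ, f α * f δ * f β ^ 2 * c := fun β =>
    (norm_block_le (B β)).trans
      (Finset.sum_le_sum fun α _ => Finset.sum_le_sum fun δ _ => hBnorm β α δ)
  refine (Finset.sum_le_sum fun β _ => hblock β).trans ?_
  have e1 : ∑ β : Λ, ∑ α : Λ, ∑ δ : Λ, f α * f δ * f β ^ 2 * c
      = (∑ β, f β ^ 2) * ((∑ α, f α) * ((∑ δ, f δ) * c)) := by
    rw [Finset.sum_mul]
    refine Finset.sum_congr rfl fun β _ => ?_
    rw [Finset.sum_mul, Finset.mul_sum]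
    refine Finset.sum_congr rfl fun α _ => ?_
    rw [Finset.sum_mul, Finset.mul_sum, Finset.mul_sum]
    exact Finset.sum_congr rfl fun δ _ => by ring
  rw [e1, hsum, one_mul]
  nlinarith [mul_le_mul_of_nonneg_right hS2 hc0]

lemma sa_aux (f : Λ → ℝ) (g : Λ → Λ → Matrix (Fin N) (Fin N) ℂ)
    (hsym : ∀ α β, f α ≠ 0 → f β ≠ 0 → g α β = star (g β α))
    (A : Matrix (Λ × Fin N) (Λ × Fin N) ℂ)
    (hA : A = Matrix.of fun p q => ((f p.1 * f q.1 : ℝ) : ℂ) * g p.1 q.1 p.2 q.2) :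
    IsSelfAdjoint A := by
  have : star A = A := by
    rw [hA]
    ext p q
    simp only [Matrix.star_apply, Matrix.of_apply, star_mul']
    by_cases hp : f p.1 = 0
    · simp [hp]
    by_cases hq : f q.1 = 0
    · simp [hq]
    rw [hsym p.1 q.1 hp hq]
    simp [Matrix.star_apply, mul_comm, Complex.conj_ofReal]
  exact this
end Stmt18Aux

/-- Let `g⁺`, `g⁻` be an `ε`-generalized pair of cocycles:
`‖(g±_{αβ} g±_{βγ} - g±_{αγ})(g⁺_{γδ} - g⁻_{γδ})‖ < ε` pointwise for both signs, with
`g±_{αβ} = (g±_{βα})⁻¹` unitary-valued, and let `(φ_α²)` be a partition of unity.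
Define `A±` by `(A±)_{αβ} = φ_α φ_β g±_{αβ}`.  Then `A₊` and `A₋` are selfadjoint and
`‖(A± - A±²)(A₊ - A₋)‖ < mε` for both signs, where `m = |Λ|`, pointwise (hence in
supremum norm).  Norms are `L²` operator norms. -/
theorem stmt_18 {N : ℕ} {X : Type*} [TopologicalSpace X] [CompactSpace X]
    {Λ : Type*} [Fintype Λ] [DecidableEq Λ]
    (φ : Λ → C(X, ℝ)) (hφ0 : ∀ α x, 0 ≤ φ α x) (hφ1 : ∀ α x, φ α x ≤ 1)
    (hsum : ∀ x, ∑ β, (φ β x) ^ 2 = 1)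
    (ε : ℝ)
    (gp gm : Λ → Λ → X → Matrix (Fin N) (Fin N) ℂ)
    (hgup : ∀ α β x, φ α x ≠ 0 → φ β x ≠ 0 → gp α β x ∈ Matrix.unitaryGroup (Fin N) ℂ)
    (hgum : ∀ α β x, φ α x ≠ 0 → φ β x ≠ 0 → gm α β x ∈ Matrix.unitaryGroup (Fin N) ℂ)
    (hgsymp : ∀ α β x, φ α x ≠ 0 → φ β x ≠ 0 → gp α β x = star (gp β α x))
    (hgsymm : ∀ α β x, φ α x ≠ 0 → φ β x ≠ 0 → gm α β x = star (gm β α x))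
    (hgenp : ∀ α β γ δ x, φ α x ≠ 0 → φ β x ≠ 0 → φ γ x ≠ 0 → φ δ x ≠ 0 →
      ‖(gp α β x * gp β γ x - gp α γ x) * (gp γ δ x - gm γ δ x)‖ < ε)
    (hgenm : ∀ α β γ δ x, φ α x ≠ 0 → φ β x ≠ 0 → φ γ x ≠ 0 → φ δ x ≠ 0 →
      ‖(gm α β x * gm β γ x - gm α γ x) * (gp γ δ x - gm γ δ x)‖ < ε)
    (Ap Am : X → Matrix (Λ × Fin N) (Λ × Fin N) ℂ)
    (hAp : ∀ x, Ap x = Matrix.of fun p q : Λ × Fin N =>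
      ((φ p.1 x * φ q.1 x : ℝ) : ℂ) * gp p.1 q.1 x p.2 q.2)
    (hAm : ∀ x, Am x = Matrix.of fun p q : Λ × Fin N =>
      ((φ p.1 x * φ q.1 x : ℝ) : ℂ) * gm p.1 q.1 x p.2 q.2) :
    ∀ x, IsSelfAdjoint (Ap x) ∧ IsSelfAdjoint (Am x) ∧
      ‖(Ap x - (Ap x) ^ 2) * (Ap x - Am x)‖ < (Fintype.card Λ : ℝ) * ε ∧
      ‖(Am x - (Am x) ^ 2) * (Ap x - Am x)‖ < (Fintype.card Λ : ℝ) * ε := by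
  classical
  intro x
  set f : Λ → ℝ := fun α => φ α x with hf
  have hfsum : ∑ β, (f β) ^ 2 = 1 := hsum x
  have hf0' : ∀ α, 0 ≤ f α := fun α => hφ0 α x
  obtain ⟨α₀, hα₀⟩ : ∃ α₀, f α₀ ≠ 0 := by
    by_contra hc
    push_neg at hc
    have h1 := hfsum
    simp only [hc] at h1
    norm_num at h1
  -- the uniform strict bound
  set S : Finset (Λ × Λ × Λ × Λ) := Finset.univ.filter
    (fun t => f t.1 ≠ 0 ∧ f t.2.1 ≠ 0 ∧ f t.2.2.1 ≠ 0 ∧ f t.2.2.2 ≠ 0) with hS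
  have ht0 : (α₀, α₀, α₀, α₀) ∈ S := by simp [hS, hα₀]
  have hSne : S.Nonempty := ⟨_, ht0⟩
  set F : Λ × Λ × Λ × Λ → ℝ := fun t =>
    max ‖(gp t.1 t.2.1 x * gp t.2.1 t.2.2.1 x - gp t.1 t.2.2.1 x) *
          (gp t.2.2.1 t.2.2.2 x - gm t.2.2.1 t.2.2.2 x)‖
        ‖(gm t.1 t.2.1 x * gm t.2.1 t.2.2.1 x - gm t.1 t.2.2.1 x) *
          (gp t.2.2.1 t.2.2.2 x - gm t.2.2.1 t.2.2.2 x)‖ with hF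
  set c : ℝ := S.sup' hSne F with hc
  have hc0 : 0 ≤ c :=
    le_trans (le_trans (norm_nonneg _) (le_max_left _ _)) (Finset.le_sup' F ht0)
  have hcε : c < ε := by
    rw [hc, Finset.sup'_lt_iff]
    intro t ht
    rw [hS, Finset.mem_filter] at ht
    obtain ⟨-, h1, h2, h3, h4⟩ := ht
    exact max_lt (hgenp _ _ _ _ x h1 h2 h3 h4) (hgenm _ _ _ _ x h1 h2 h3 h4)
  have hbp : ∀ α β γ δ, f α ≠ 0 → f β ≠ 0 → f γ ≠ 0 → f δ ≠ 0 →
      ‖(gp α β x * gp β γ x - gp α γ x) * ((gp γ δ x) - (gm γ δ x))‖ ≤ c := by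
    intro α β γ δ h1 h2 h3 h4
    have hm : (α, β, γ, δ) ∈ S := by simp [hS, h1, h2, h3, h4]
    exact le_trans (le_max_left _ _) (Finset.le_sup' F hm)
  have hbm : ∀ α β γ δ, f α ≠ 0 → f β ≠ 0 → f γ ≠ 0 → f δ ≠ 0 →
      ‖(gm α β x * gm β γ x - gm α γ x) * ((gp γ δ x) - (gm γ δ x))‖ ≤ c := by
    intro α β γ δ h1 h2 h3 h4
    have hm : (α, β, γ, δ) ∈ S := by simp [hS, h1, h2, h3, h4]
    exact le_trans (le_max_right _ _) (Finset.le_sup' F hm)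
  have hD : Ap x - Am x = Matrix.of fun p q : Λ × Fin N =>
      ((f p.1 * f q.1 : ℝ) : ℂ) * ((gp p.1 q.1 x - gm p.1 q.1 x) p.2 q.2) := by
    rw [hAp x, hAm x]
    ext p q
    simp [Matrix.sub_apply, mul_sub, hf]
  have hcard : (0 : ℝ) < (Fintype.card Λ : ℝ) := by
    have : Nonempty Λ := ⟨α₀⟩
    exact_mod_cast Fintype.card_pos
  have hlt : (Fintype.card Λ : ℝ) * c < (Fintype.card Λ : ℝ) * ε :=
    mul_lt_mul_of_pos_left hcε hcard
  refine ⟨?_, ?_, ?_, ?_⟩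
  · exact Stmt18Aux.sa_aux f (fun α β => gp α β x)
      (fun α β h1 h2 => hgsymp α β x h1 h2) (Ap x) (hAp x)
  · exact Stmt18Aux.sa_aux f (fun α β => gm α β x)
      (fun α β h1 h2 => hgsymm α β x h1 h2) (Am x) (hAm x)
  · exact lt_of_le_of_lt
      (Stmt18Aux.aux f hf0' hfsum c hc0 (fun α β => gp α β x)
        (fun γ δ => gp γ δ x - gm γ δ x) hbp (Ap x) (Ap x - Am x) (hAp x) hD) hlt
  · exact lt_of_le_of_lt
      (Stmt18Aux.aux f hf0' hfsum c hc0 (fun α β => gm α β x)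
        (fun γ δ => gp γ δ x - gm γ δ x) hbm (Am x) (Ap x - Am x) (hAm x) hD) hlt
end
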